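/- arXiv:2308.13025 — 3 statements merged into one kernel-verified Lean document; each statement's English description precedes it below -/
import Mathlib

section
/- Let P_1, …, P_m be a Clifford system of signature (m, r) on ℝ^{2l}_s with m ≡ 0 (mod 4), r ≡ 0 (mod 2), and s ≤ 2l − 1, and set P := P_1P_2⋯P_m. Assume one of the following two cases holds: (a) r = 0 and s = 2(l − m); (b) r ∈ {2, 4, …, m−2}, s = l, and l = 2(m − r) > 0. Then M_+ is disconnected, M_{+,3} = ∅, M_{+,1} and M_{+,2} are both non-empty and path-connected, and the connected components of M_+ are exactly M_{+,1} and M_{+,2}. -/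
open Matrix

noncomputable section

/-- Entries of the signature matrix `J_{r,m-r}`, with 1-based indices:
`η_{ii} = -1` for `1 ≤ i ≤ r` and `η_{ii} = 1` for `r < i`; off-diagonal entries vanish. -/
def cliffEta (r i j : ℕ) : ℝ :=
  if i = j then (if i ≤ r then -1 else 1) else 0

/-- The matrix `J_{s,n-s} = diag(-E_s, E_{n-s})`. -/
def psJ (n s : ℕ) : Matrix (Fin n) (Fin n) ℝ :=
  Matrix.diagonal fun i => if (i : ℕ) < s then (-1 : ℝ) else 1

/-- The pseudo-inner product `⟨u, v⟩ = uᵀ J_{s,n-s} v` of `ℝ^n_s`. -/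
def psInner (n s : ℕ) (u v : Fin n → ℝ) : ℝ :=
  u ⬝ᵥ ((psJ n s) *ᵥ v)

/-- A Clifford system of signature `(m, r)` on `ℝ^{2l}_s`, indexed by `1, …, m`:
each `P i` is symmetric with respect to the pseudo-inner product, and
`P i * P j + P j * P i = 2 η_{ij} E_{2l}`. -/
def IsCliffordSystem (l s m r : ℕ)
    (P : ℕ → Matrix (Fin (2 * l)) (Fin (2 * l)) ℝ) : Prop :=
  (∀ i ∈ Finset.Icc 1 m, (P i)ᵀ = psJ (2 * l) s * P i * psJ (2 * l) s) ∧
  (∀ i ∈ Finset.Icc 1 m, ∀ j ∈ Finset.Icc 1 m,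
    P i * P j + P j * P i
      = (2 * cliffEta r i j) • (1 : Matrix (Fin (2 * l)) (Fin (2 * l)) ℝ))

namespace Cliff

variable {n s m r : ℕ} {P : ℕ → Matrix (Fin n) (Fin n) ℝ}

lemma psJ_mul_psJ : psJ n s * psJ n s = 1 := by
  have h : (fun i : Fin n => (if (i:ℕ)<s then (-1:ℝ) else 1) * (if (i:ℕ)<s then (-1:ℝ) else 1))
      = fun _ => (1:ℝ) := by
    funext i; by_cases h : (i:ℕ) < s <;> simp [h]
  rw [psJ, Matrix.diagonal_mul_diagonal, h, Matrix.diagonal_one]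

lemma psInner_eq_sum (u v : Fin n → ℝ) :
    psInner n s u v = ∑ j : Fin n, (if (j : ℕ) < s then (-1:ℝ) else 1) * u j * v j := by
  simp only [psInner, dotProduct, psJ, Matrix.mulVec_diagonal]
  exact Finset.sum_congr rfl fun j _ => by ring

lemma psInner_comm (u v : Fin n → ℝ) : psInner n s u v = psInner n s v u := by
  rw [psInner_eq_sum, psInner_eq_sum]
  exact Finset.sum_congr rfl fun j _ => by ring

lemma psInner_zero_left (v : Fin n → ℝ) : psInner n s 0 v = 0 := by
  simp [psInner]

lemma psInner_add_left (u v w : Fin n → ℝ) :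
    psInner n s (u + v) w = psInner n s u w + psInner n s v w := by
  simp [psInner, add_dotProduct]

lemma psInner_add_right (u v w : Fin n → ℝ) :
    psInner n s u (v + w) = psInner n s u v + psInner n s u w := by
  simp [psInner, Matrix.mulVec_add, dotProduct_add]

lemma psInner_smul_left (a : ℝ) (u v : Fin n → ℝ) :
    psInner n s (a • u) v = a * psInner n s u v := by
  simp [psInner, smul_dotProduct]

lemma psInner_smul_right (a : ℝ) (u v : Fin n → ℝ) :
    psInner n s u (a • v) = a * psInner n s u v := by
  simp [psInner, Matrix.mulVec_smul, dotProduct_smul]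

lemma psInner_neg_right (u v : Fin n → ℝ) :
    psInner n s u (-v) = - psInner n s u v := by
  have := psInner_smul_right (n := n) (s := s) (-1) u v
  simpa using this

lemma psInner_expand (a b c d : ℝ) (u v u' v' : Fin n → ℝ) :
    psInner n s (a • u + b • v) (c • u' + d • v')
      = a*c * psInner n s u u' + a*d * psInner n s u v'
        + b*c * psInner n s v u' + b*d * psInner n s v v' := by
  rw [psInner_add_left, psInner_add_right, psInner_add_right, psInner_smul_left,
    psInner_smul_left, psInner_smul_left, psInner_smul_left, psInner_smul_right,
    psInner_smul_right, psInner_smul_right, psInner_smul_right]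
  ring

lemma psInner_sum_left {ι : Type*} [DecidableEq ι] (t : Finset ι) (f : ι → Fin n → ℝ)
    (v : Fin n → ℝ) :
    psInner n s (∑ i ∈ t, f i) v = ∑ i ∈ t, psInner n s (f i) v := by
  induction t using Finset.induction_on with
  | empty => simp [psInner_zero_left]
  | insert _ _ hx ih => rw [Finset.sum_insert hx, Finset.sum_insert hx, psInner_add_left, ih]

lemma dot_mulVec_left (A : Matrix (Fin n) (Fin n) ℝ) (u w : Fin n → ℝ) :
    (A *ᵥ u) ⬝ᵥ w = u ⬝ᵥ (Aᵀ *ᵥ w) := by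
  rw [dotProduct_comm, Matrix.dotProduct_mulVec, ← Matrix.mulVec_transpose,
    dotProduct_comm]

lemma psInner_adjoint {A : Matrix (Fin n) (Fin n) ℝ}
    (hA : Aᵀ = psJ n s * A * psJ n s) (u v : Fin n → ℝ) :
    psInner n s (A *ᵥ u) v = psInner n s u (A *ᵥ v) := by
  unfold psInner
  rw [dot_mulVec_left, Matrix.mulVec_mulVec, hA]
  rw [Matrix.mul_assoc, psJ_mul_psJ, Matrix.mul_one, ← Matrix.mulVec_mulVec]

lemma mulVec_combo (A : Matrix (Fin n) (Fin n) ℝ) (a b : ℝ) (u v : Fin n → ℝ) :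
    A *ᵥ (a • u + b • v) = a • (A *ᵥ u) + b • (A *ᵥ v) := by
  rw [Matrix.mulVec_add, Matrix.mulVec_smul, Matrix.mulVec_smul]

lemma neg_one_pow_sq (k : ℕ) : ((-1:ℝ))^k * ((-1:ℝ))^k = 1 := by
  rw [← pow_add]
  exact Even.neg_one_pow ⟨k, rfl⟩

lemma anticomm (hrel : ∀ i ∈ Finset.Icc 1 m, ∀ j ∈ Finset.Icc 1 m,
      P i * P j + P j * P i = (2 * cliffEta r i j) • 1)
    {i j : ℕ} (hi : i ∈ Finset.Icc 1 m) (hj : j ∈ Finset.Icc 1 m) (hij : i ≠ j) :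
    P i * P j = -(P j * P i) := by
  have h := hrel i hi j hj
  rw [cliffEta, if_neg hij] at h
  rw [eq_neg_iff_add_eq_zero, h]
  simp

lemma sq_eq (hrel : ∀ i ∈ Finset.Icc 1 m, ∀ j ∈ Finset.Icc 1 m,
      P i * P j + P j * P i = (2 * cliffEta r i j) • 1)
    {i : ℕ} (hi : i ∈ Finset.Icc 1 m) :
    P i * P i = cliffEta r i i • 1 := by
  have h := hrel i hi i hi
  have h2 : (2:ℝ) • (P i * P i) = (2 * cliffEta r i i) • 1 := by
    rw [two_smul]; exact h
  have := congrArg (fun X => (2:ℝ)⁻¹ • X) h2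
  simpa [smul_smul, ← mul_assoc] using this

lemma move (hrel : ∀ i ∈ Finset.Icc 1 m, ∀ j ∈ Finset.Icc 1 m,
      P i * P j + P j * P i = (2 * cliffEta r i j) • 1)
    {j : ℕ} (hj : j ∈ Finset.Icc 1 m) :
    ∀ (L : List ℕ), (∀ x ∈ L, x ∈ Finset.Icc 1 m ∧ x ≠ j) →
      P j * (L.map P).prod = ((-1:ℝ)^L.length) • ((L.map P).prod * P j)
  | [], _ => by simp
  | a :: L, hL => by
    have ha := hL a (List.mem_cons_self)
    have hrec := move hrel hj L (fun x hx => hL x (List.mem_cons_of_mem a hx))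
    have hac : P j * P a = -(P a * P j) :=
      anticomm hrel hj ha.1 (Ne.symm ha.2)
    simp only [List.map_cons, List.prod_cons, List.length_cons]
    calc P j * (P a * (L.map P).prod) = (P j * P a) * (L.map P).prod := by rw [mul_assoc]
    _ = -(P a * (P j * (L.map P).prod)) := by rw [hac]; simp [mul_assoc]
    _ = -(P a * ((-1:ℝ)^L.length • ((L.map P).prod * P j))) := by rw [hrec]
    _ = ((-1:ℝ)^(L.length + 1)) • (P a * ((L.map P).prod * P j)) := by
        rw [Matrix.mul_smul, ← neg_smul]
        congr 1
        rw [pow_succ]; ring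
    _ = ((-1:ℝ)^(L.length + 1)) • (P a * (L.map P).prod * P j) := by rw [← mul_assoc]

lemma move_rev (hrel : ∀ i ∈ Finset.Icc 1 m, ∀ j ∈ Finset.Icc 1 m,
      P i * P j + P j * P i = (2 * cliffEta r i j) • 1)
    {j : ℕ} (hj : j ∈ Finset.Icc 1 m)
    (L : List ℕ) (hL : ∀ x ∈ L, x ∈ Finset.Icc 1 m ∧ x ≠ j) :
    (L.map P).prod * P j = ((-1:ℝ)^L.length) • (P j * (L.map P).prod) := by
  rw [move hrel hj L hL, smul_smul, neg_one_pow_sq, one_smul]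

lemma move' (hrel : ∀ i ∈ Finset.Icc 1 m, ∀ j ∈ Finset.Icc 1 m,
      P i * P j + P j * P i = (2 * cliffEta r i j) • 1)
    {j : ℕ} (hj : j ∈ Finset.Icc 1 m) :
    ∀ (L : List ℕ), (∀ x ∈ L, x ∈ Finset.Icc 1 m) → L.Nodup → j ∈ L →
      P j * (L.map P).prod = ((-1:ℝ)^(L.length - 1)) • ((L.map P).prod * P j)
  | [], _, _, hmem => by simp at hmem
  | a :: L, hL, hnd, hmem => by
    have hndL := (List.nodup_cons.mp hnd).2
    have hnaL := (List.nodup_cons.mp hnd).1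
    simp only [List.map_cons, List.prod_cons, List.length_cons, Nat.add_sub_cancel]
    rcases eq_or_ne j a with rfl | hne
    · have hLprop : ∀ x ∈ L, x ∈ Finset.Icc 1 m ∧ x ≠ j := fun x hx =>
        ⟨hL x (List.mem_cons_of_mem _ hx), fun h => hnaL (h ▸ hx)⟩
      have hQ : (L.map P).prod * P j = ((-1:ℝ)^L.length) • (P j * (L.map P).prod) :=
        move_rev hrel hj L hLprop
      calc P j * (P j * (L.map P).prod) = (P j * P j) * (L.map P).prod := by rw [mul_assoc]
      _ = ((-1:ℝ)^L.length) • ((-1:ℝ)^L.length • ((P j * P j) * (L.map P).prod)) := by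
          rw [smul_smul, neg_one_pow_sq, one_smul]
      _ = ((-1:ℝ)^L.length) • (P j * ((L.map P).prod * P j)) := by
          congr 1
          rw [hQ]
          rw [Matrix.mul_smul]
          congr 1
          rw [mul_assoc]
      _ = ((-1:ℝ)^L.length) • (P j * (L.map P).prod * P j) := by rw [← mul_assoc]
    · have hjL : j ∈ L := by
        rcases List.mem_cons.mp hmem with h | h
        · exact absurd h hne
        · exact h
      have hlen : L.length - 1 + 1 = L.length :=
        Nat.succ_pred_eq_of_pos (List.length_pos_iff.mpr (List.ne_nil_of_mem hjL))
      have ha : a ∈ Finset.Icc 1 m := hL a (List.mem_cons_self)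
      have hac : P j * P a = -(P a * P j) := anticomm hrel hj ha hne
      have hrec := move' hrel hj L (fun x hx => hL x (List.mem_cons_of_mem a hx)) hndL hjL
      calc P j * (P a * (L.map P).prod) = (P j * P a) * (L.map P).prod := by rw [mul_assoc]
      _ = -(P a * (P j * (L.map P).prod)) := by rw [hac]; simp [mul_assoc]
      _ = -(P a * ((-1:ℝ)^(L.length - 1) • ((L.map P).prod * P j))) := by rw [hrec]
      _ = ((-1:ℝ)^(L.length - 1 + 1)) • (P a * ((L.map P).prod * P j)) := by
          rw [Matrix.mul_smul, ← neg_smul]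
          congr 1
          rw [pow_succ]; ring
      _ = ((-1:ℝ)^L.length) • (P a * (L.map P).prod * P j) := by rw [hlen, ← mul_assoc]

lemma prod_sq (hrel : ∀ i ∈ Finset.Icc 1 m, ∀ j ∈ Finset.Icc 1 m,
      P i * P j + P j * P i = (2 * cliffEta r i j) • 1) :
    ∀ (L : List ℕ), (∀ x ∈ L, x ∈ Finset.Icc 1 m) → L.Nodup →
      (L.map P).prod * (L.map P).prod
        = (((-1:ℝ)^(L.length.choose 2)) * (L.map (fun x => cliffEta r x x)).prod) • 1
  | [], _, _ => by simp
  | a :: L, hL, hnd => by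
    have hndL := (List.nodup_cons.mp hnd).2
    have hnaL := (List.nodup_cons.mp hnd).1
    have ha : a ∈ Finset.Icc 1 m := hL a (List.mem_cons_self)
    have hLm : ∀ x ∈ L, x ∈ Finset.Icc 1 m := fun x hx => hL x (List.mem_cons_of_mem a hx)
    have hLprop : ∀ x ∈ L, x ∈ Finset.Icc 1 m ∧ x ≠ a := fun x hx =>
      ⟨hLm x hx, fun h => hnaL (h ▸ hx)⟩
    have hrec := prod_sq hrel L hLm hndL
    have hQ : (L.map P).prod * P a = ((-1:ℝ)^L.length) • (P a * (L.map P).prod) :=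
      move_rev hrel ha L hLprop
    simp only [List.map_cons, List.prod_cons, List.length_cons]
    calc (P a * (L.map P).prod) * (P a * (L.map P).prod)
        = P a * (((L.map P).prod * P a) * (L.map P).prod) := by
          simp only [mul_assoc]
    _ = ((-1:ℝ)^L.length) • (P a * (P a * ((L.map P).prod * (L.map P).prod))) := by
          rw [hQ, Matrix.smul_mul, Matrix.mul_smul]
          congr 1
          simp only [mul_assoc]
    _ = ((-1:ℝ)^L.length) • ((P a * P a) * ((L.map P).prod * (L.map P).prod)) := by
          rw [mul_assoc]
    _ = ((-1:ℝ)^L.length) • ((cliffEta r a a • (1:Matrix (Fin n) (Fin n) ℝ)) *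
          ((((-1:ℝ)^(L.length.choose 2)) * (L.map (fun x => cliffEta r x x)).prod) • 1)) := by
          rw [sq_eq hrel ha, hrec]
    _ = (((-1:ℝ)^((L.length + 1).choose 2)) *
          ((a :: L).map (fun x => cliffEta r x x)).prod) • 1 := by
          rw [Matrix.smul_mul, Matrix.mul_smul, smul_smul, smul_smul, Matrix.one_mul]
          congr 1
          rw [Nat.choose_succ_succ, Nat.choose_one_right, pow_add]
          simp only [List.map_cons, List.prod_cons]
          ring

lemma prod_reverse (hrel : ∀ i ∈ Finset.Icc 1 m, ∀ j ∈ Finset.Icc 1 m,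
      P i * P j + P j * P i = (2 * cliffEta r i j) • 1) :
    ∀ (L : List ℕ), (∀ x ∈ L, x ∈ Finset.Icc 1 m) → L.Nodup →
      ((L.reverse.map P)).prod = ((-1:ℝ)^(L.length.choose 2)) • (L.map P).prod
  | [], _, _ => by simp
  | a :: L, hL, hnd => by
    have hndL := (List.nodup_cons.mp hnd).2
    have hnaL := (List.nodup_cons.mp hnd).1
    have ha : a ∈ Finset.Icc 1 m := hL a (List.mem_cons_self)
    have hLm : ∀ x ∈ L, x ∈ Finset.Icc 1 m := fun x hx => hL x (List.mem_cons_of_mem a hx)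
    have hLprop : ∀ x ∈ L, x ∈ Finset.Icc 1 m ∧ x ≠ a := fun x hx =>
      ⟨hLm x hx, fun h => hnaL (h ▸ hx)⟩
    have hrec := prod_reverse hrel L hLm hndL
    simp only [List.reverse_cons, List.map_append, List.prod_append, List.map_cons,
      List.map_nil, List.prod_cons, List.prod_nil, Matrix.mul_one, List.length_cons]
    rw [hrec, Matrix.smul_mul, move_rev hrel ha L hLprop, smul_smul, ← pow_add]
    congr 1
    rw [Nat.choose_succ_succ, Nat.choose_one_right, pow_add, pow_add]
    ring

lemma prod_transpose (hsym : ∀ i ∈ Finset.Icc 1 m, (P i)ᵀ = psJ n s * P i * psJ n s) :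
    ∀ (L : List ℕ), (∀ x ∈ L, x ∈ Finset.Icc 1 m) →
      ((L.map P).prod)ᵀ = psJ n s * ((L.reverse.map P).prod) * psJ n s
  | [], _ => by
    simp only [List.map_nil, List.prod_nil, Matrix.transpose_one, List.reverse_nil,
      Matrix.mul_one]
    rw [psJ_mul_psJ]
  | a :: L, hL => by
    have ha := hL a (List.mem_cons_self)
    have hrec := prod_transpose hsym L (fun x hx => hL x (List.mem_cons_of_mem a hx))
    simp only [List.map_cons, List.prod_cons, Matrix.transpose_mul, List.reverse_cons,
      List.map_append, List.prod_append, List.map_cons, List.map_nil, List.prod_cons,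
      List.prod_nil, Matrix.mul_one]
    rw [hrec, hsym a ha]
    calc psJ n s * (L.reverse.map P).prod * psJ n s * (psJ n s * P a * psJ n s)
        = psJ n s * (L.reverse.map P).prod * (psJ n s * psJ n s) * P a * psJ n s := by
          simp only [mul_assoc]
    _ = psJ n s * ((L.reverse.map P).prod * P a) * psJ n s := by
          rw [psJ_mul_psJ]
          simp only [mul_assoc, Matrix.one_mul]

def idxL (m : ℕ) : List ℕ := (List.range m).map (fun k => 1 + k)

lemma idxL_length : (idxL m).length = m := by simp [idxL]

lemma idxL_nodup : (idxL m).Nodup :=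
  List.nodup_range.map (fun a b h => by omega)

lemma idxL_mem {x : ℕ} (hx : x ∈ idxL m) : x ∈ Finset.Icc 1 m := by
  simp only [idxL, List.mem_map, List.mem_range] at hx
  obtain ⟨k, hk, rfl⟩ := hx
  simp [Finset.mem_Icc]; omega

lemma mem_idxL {x : ℕ} (hx : x ∈ Finset.Icc 1 m) : x ∈ idxL m := by
  simp only [Finset.mem_Icc] at hx
  simp only [idxL, List.mem_map, List.mem_range]
  exact ⟨x - 1, by omega, by omega⟩

lemma eta_prod_eq (hrm : r ≤ m) :
    ((idxL m).map (fun x => cliffEta r x x)).prod = (-1:ℝ)^r := by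
  have key : ∀ (M : ℕ), ((idxL M).map (fun x => cliffEta r x x)).prod = (-1:ℝ)^(min r M) := by
    intro M
    induction M with
    | zero => simp [idxL]
    | succ M ih =>
      have : idxL (M+1) = idxL M ++ [1 + M] := by
        simp [idxL, List.range_succ]
      rw [this]
      simp only [List.map_append, List.prod_append, List.map_cons, List.map_nil,
        List.prod_cons, List.prod_nil, mul_one, ih]
      rcases le_or_gt (M+1) r with h | h
      · have h1 : min r M = M := min_eq_right (by omega)
        have h2 : min r (M+1) = M+1 := min_eq_right (by omega)
        have he : cliffEta r (1+M) (1+M) = -1 := by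
          unfold cliffEta
          rw [if_pos rfl, if_pos (show 1+M ≤ r by omega)]
        rw [he, h1, h2, pow_succ]
      · have h1 : min r M = r := min_eq_left (by omega)
        have h2 : min r (M+1) = r := min_eq_left (by omega)
        have he : cliffEta r (1+M) (1+M) = 1 := by
          unfold cliffEta
          rw [if_pos rfl, if_neg (show ¬(1+M ≤ r) by omega)]
        rw [he, h1, h2, mul_one]
  rw [key m, min_eq_left hrm]

lemma choose_two_even (hm4 : m % 4 = 0) : Even (m.choose 2) := by
  obtain ⟨t, rfl⟩ : ∃ t, m = 4 * t := ⟨m / 4, by omega⟩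
  rw [Nat.choose_two_right]
  have h : 4 * t * (4 * t - 1) = 2 * (2 * t * (4 * t - 1)) := by ring
  rw [h, Nat.mul_div_cancel_left _ (by norm_num)]
  exact ⟨t * (4*t-1), by ring⟩

lemma card_subtype_ge (hsn : s ≤ n) : Fintype.card {j : Fin n // s ≤ (j : ℕ)} = n - s := by
  have e : {j : Fin n // s ≤ (j : ℕ)} ≃ Fin (n - s) :=
    { toFun := fun j => ⟨(j : Fin n) - s, by omega⟩
      invFun := fun k => ⟨⟨s + (k : ℕ), by omega⟩, by simp⟩
      left_inv := fun j => by
        ext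
        simp only []
        omega
      right_inv := fun k => by
        ext
        simp only []
        omega }
  rw [Fintype.card_congr e, Fintype.card_fin]

lemma card_le_of_pos_orth (hsn : s ≤ n) {ι : Type} [Fintype ι] (v : ι → Fin n → ℝ)
    (horth : ∀ i j, i ≠ j → psInner n s (v i) (v j) = 0)
    (hpos : ∀ i, 0 < psInner n s (v i) (v i)) :
    Fintype.card ι ≤ n - s := by
  classical
  set π : (Fin n → ℝ) →ₗ[ℝ] ({j : Fin n // s ≤ (j : ℕ)} → ℝ) :=
    LinearMap.funLeft ℝ ℝ (fun j => (j : Fin n)) with hπ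
  have hli : LinearIndependent ℝ (fun i => π (v i)) := by
    rw [Fintype.linearIndependent_iff]
    intro g hg
    set w : Fin n → ℝ := ∑ i, g i • v i with hw
    have hπw : π w = 0 := by
      rw [hw, map_sum]
      simpa [_root_.map_smul] using hg
    have hwzero : ∀ j : Fin n, s ≤ (j : ℕ) → w j = 0 := by
      intro j hj
      have := congrFun hπw ⟨j, hj⟩
      simpa [hπ, LinearMap.funLeft] using this
    have hle : psInner n s w w ≤ 0 := by
      rw [psInner_eq_sum]
      apply Finset.sum_nonpos
      intro j _
      by_cases hj : (j : ℕ) < s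
      · rw [if_pos hj]
        nlinarith [sq_nonneg (w j)]
      · rw [hwzero j (by omega)]
        ring_nf
        exact le_refl 0
    have hexp : psInner n s w w = ∑ i, g i ^ 2 * psInner n s (v i) (v i) := by
      rw [hw, psInner_sum_left]
      refine Finset.sum_congr rfl fun i _ => ?_
      rw [psInner_smul_left, psInner_comm, psInner_sum_left]
      rw [Finset.sum_eq_single i]
      · rw [psInner_smul_left, psInner_comm]
        ring
      · intro b _ hb
        rw [psInner_smul_left, psInner_comm, horth i b (fun h => hb h.symm)]
        ring
      · intro h
        exact absurd (Finset.mem_univ i) h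
    have hsumzero : ∑ i, g i ^ 2 * psInner n s (v i) (v i) = 0 := by
      have h1 : (0:ℝ) ≤ ∑ i, g i ^ 2 * psInner n s (v i) (v i) :=
        Finset.sum_nonneg fun i _ => mul_nonneg (sq_nonneg _) (le_of_lt (hpos i))
      linarith [hexp ▸ hle]
    intro i
    have := (Finset.sum_eq_zero_iff_of_nonneg
      (fun i _ => mul_nonneg (sq_nonneg (g i)) (le_of_lt (hpos i)))).mp hsumzero i
      (Finset.mem_univ i)
    have hne : psInner n s (v i) (v i) ≠ 0 := ne_of_gt (hpos i)
    have : g i ^ 2 = 0 := by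
      rcases mul_eq_zero.mp this with h | h
      · exact h
      · exact absurd h hne
    exact pow_eq_zero_iff (n := 2) (by norm_num) |>.mp this
  calc Fintype.card ι ≤ Module.finrank ℝ ({j : Fin n // s ≤ (j : ℕ)} → ℝ) :=
        hli.fintype_card_le_finrank
  _ = Fintype.card {j : Fin n // s ≤ (j : ℕ)} := Module.finrank_pi ℝ
  _ = n - s := card_subtype_ge hsn

end Cliff


set_option maxHeartbeats 2000000 in
open Cliff in
/-- with `m ≡ 0 (mod 4)`, `r ≡ 0 (mod 2)`, `s ≤ 2l - 1`,
`P = P_1 ⋯ P_m`, in the cases (a) `r = 0` and `s = 2(l - m)`, or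
(b) `r ∈ {2, 4, …, m-2}`, `s = l` and `l = 2(m - r) > 0`: `M₊` is disconnected,
`M₊,₃ = ∅`, `M₊,₁` and `M₊,₂` are non-empty and path-connected, and the connected
components of `M₊` are exactly `M₊,₁` and `M₊,₂`. -/
theorem Mplus_disconnected_cases (l s m r : ℕ) (hl : 0 < l) (hs : s ≤ 2 * l - 1)
    (hm : 2 ≤ m) (hm4 : m % 4 = 0) (hr : r ≤ m) (hr2 : r % 2 = 0)
    (P : ℕ → Matrix (Fin (2 * l)) (Fin (2 * l)) ℝ)
    (hP : IsCliffordSystem l s m r P)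
    (Pm : Matrix (Fin (2 * l)) (Fin (2 * l)) ℝ)
    (hPm : Pm = ((List.range m).map fun k => P (1 + k)).prod)
    (Mp : Set (Fin (2 * l) → ℝ))
    (hMp : Mp = {x | psInner (2 * l) s x x = 1 ∧
      ∀ j ∈ Finset.Icc 1 m, psInner (2 * l) s (P j *ᵥ x) x = 0})
    (zpl : (Fin (2 * l) → ℝ) → (Fin (2 * l) → ℝ))
    (hzpl : zpl = fun z => (1 / 2 : ℝ) • (z + Pm *ᵥ z))
    (M1 M2 M3 : Set (Fin (2 * l) → ℝ))
    (hM1 : M1 = {z ∈ Mp | 1 ≤ psInner (2 * l) s (zpl z) (zpl z)})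
    (hM2 : M2 = {z ∈ Mp | psInner (2 * l) s (zpl z) (zpl z) ≤ 0})
    (hM3 : M3 = {z ∈ Mp | 0 < psInner (2 * l) s (zpl z) (zpl z) ∧
      psInner (2 * l) s (zpl z) (zpl z) < 1})
    (hcase : (r = 0 ∧ s + 2 * m = 2 * l) ∨
      (2 ≤ r ∧ r + 2 ≤ m ∧ s = l ∧ l = 2 * (m - r) ∧ 0 < m - r)) :
    ¬ IsPreconnected Mp ∧ M3 = ∅ ∧ Mp = M1 ∪ M2 ∧
    M1.Nonempty ∧ M2.Nonempty ∧ IsPathConnected M1 ∧ IsPathConnected M2 ∧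
    (∀ z ∈ M1, connectedComponentIn Mp z = M1) ∧
    (∀ z ∈ M2, connectedComponentIn Mp z = M2) := by
  obtain ⟨hsym, hrel⟩ := hP
  have hsn : s < 2 * l := by omega
  have hr2m : r + 2 ≤ m := by rcases hcase with ⟨h0, _⟩ | ⟨_, h2, _⟩ <;> omega
  have hrltm : r < m := by omega
  -- Pm basic facts
  have hPmL : Pm = ((idxL m).map P).prod := by
    rw [hPm, idxL, List.map_map]
    rfl
  have hPm2 : Pm * Pm = 1 := by
    rw [hPmL, prod_sq hrel _ (fun x hx => idxL_mem hx) idxL_nodup, idxL_length,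
      eta_prod_eq hr]
    rw [Even.neg_one_pow (choose_two_even hm4), Even.neg_one_pow (Nat.even_iff.mpr hr2)]
    simp
  have hPmT : Pmᵀ = psJ (2 * l) s * Pm * psJ (2 * l) s := by
    conv_lhs => rw [hPmL]
    rw [prod_transpose hsym _ (fun x hx => idxL_mem hx),
      prod_reverse hrel _ (fun x hx => idxL_mem hx) idxL_nodup, idxL_length,
      Even.neg_one_pow (choose_two_even hm4), one_smul, ← hPmL]
  have hPmAdj : ∀ u v, psInner (2 * l) s (Pm *ᵥ u) v = psInner (2 * l) s u (Pm *ᵥ v) :=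
    fun u v => psInner_adjoint hPmT u v
  have hPiAdj : ∀ i ∈ Finset.Icc 1 m, ∀ u v,
      psInner (2 * l) s (P i *ᵥ u) v = psInner (2 * l) s u (P i *ᵥ v) :=
    fun i hi u v => psInner_adjoint (hsym i hi) u v
  have hPmInv : ∀ x, Pm *ᵥ (Pm *ᵥ x) = x := by
    intro x
    rw [Matrix.mulVec_mulVec, hPm2, Matrix.one_mulVec]
  have hanti : ∀ i ∈ Finset.Icc 1 m, P i * Pm = -(Pm * P i) := by
    intro i hi
    rw [hPmL, move' hrel hi _ (fun x hx => idxL_mem hx) idxL_nodup (mem_idxL hi), idxL_length]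
    have : Odd (m - 1) := by
      rcases Nat.even_iff.mpr (by omega : m % 2 = 0) with ⟨t, ht⟩
      exact ⟨t - 1, by omega⟩
    rw [Odd.neg_one_pow this, neg_smul, one_smul]
  have hantiV : ∀ i ∈ Finset.Icc 1 m, ∀ x,
      P i *ᵥ (Pm *ᵥ x) = -(Pm *ᵥ (P i *ᵥ x)) := by
    intro i hi x
    rw [Matrix.mulVec_mulVec, Matrix.mulVec_mulVec, hanti i hi, Matrix.neg_mulVec]
  -- eigen-projections
  have hzdec : ∀ z, z = zpl z + (z - zpl z) := fun z => by abel
  have hPmzp : ∀ z, Pm *ᵥ zpl z = zpl z := by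
    intro z
    rw [hzpl]
    simp only
    rw [Matrix.mulVec_smul, Matrix.mulVec_add, hPmInv, add_comm]
  have hPmzm : ∀ z, Pm *ᵥ (z - zpl z) = -(z - zpl z) := by
    intro z
    rw [Matrix.mulVec_sub, hPmzp]
    have h2 : zpl z = (1/2:ℝ) • (z + Pm *ᵥ z) := by rw [hzpl]
    rw [h2]
    module
  have horthPM : ∀ u v, Pm *ᵥ u = u → Pm *ᵥ v = -v → psInner (2 * l) s u v = 0 := by
    intro u v hu hv
    have h1 : psInner (2 * l) s u v = - psInner (2 * l) s u v := by
      conv_lhs => rw [← hu, hPmAdj, hv, psInner_neg_right]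
    linarith
  have hsqV : ∀ i ∈ Finset.Icc 1 m, ∀ x, P i *ᵥ (P i *ᵥ x) = cliffEta r i i • x := by
    intro i hi x
    rw [Matrix.mulVec_mulVec, sq_eq hrel hi, Matrix.smul_mulVec, Matrix.one_mulVec]
  have hPiPj0 : ∀ i ∈ Finset.Icc 1 m, ∀ j ∈ Finset.Icc 1 m, i ≠ j → ∀ x,
      psInner (2 * l) s (P i *ᵥ x) (P j *ᵥ x) = 0 := by
    intro i hi j hj hij x
    have hac : ∀ y, P i *ᵥ (P j *ᵥ y) = -(P j *ᵥ (P i *ᵥ y)) := by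
      intro y
      rw [Matrix.mulVec_mulVec, Matrix.mulVec_mulVec, anticomm hrel hi hj hij,
        Matrix.neg_mulVec]
    have h1 : psInner (2 * l) s (P i *ᵥ x) (P j *ᵥ x) = psInner (2 * l) s x (P i *ᵥ (P j *ᵥ x)) :=
      hPiAdj i hi x _
    have h2 : psInner (2 * l) s (P i *ᵥ x) (P j *ᵥ x) = - psInner (2 * l) s x (P i *ᵥ (P j *ᵥ x)) := by
      rw [psInner_comm, hPiAdj j hj, hac x, psInner_neg_right, neg_neg]
    linarith [h1, h2]
  have hPiPi : ∀ i ∈ Finset.Icc 1 m, ∀ u v,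
      psInner (2 * l) s (P i *ᵥ u) (P i *ᵥ v) = cliffEta r i i * psInner (2 * l) s u v := by
    intro i hi u v
    rw [hPiAdj i hi, hsqV i hi, psInner_smul_right]
  have hetapos : ∀ i, r < i → cliffEta r i i = 1 := by
    intro i hri
    unfold cliffEta
    rw [if_pos rfl, if_neg (by omega)]
  -- E₊/E₋ exchange
  have hEplus : ∀ i ∈ Finset.Icc 1 m, ∀ x, Pm *ᵥ x = x →
      Pm *ᵥ (P i *ᵥ x) = -(P i *ᵥ x) := by
    intro i hi x hx
    have := hantiV i hi x
    rw [hx] at this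
    rw [eq_comm, neg_eq_iff_eq_neg] at this
    rw [← this]
  have hEminus : ∀ i ∈ Finset.Icc 1 m, ∀ x, Pm *ᵥ x = -x →
      Pm *ᵥ (P i *ᵥ x) = P i *ᵥ x := by
    intro i hi x hx
    have h := hantiV i hi x
    rw [hx, Matrix.mulVec_neg] at h
    exact (neg_inj.mp h).symm
  
  -- norm decomposition
  have hq_c : ∀ z, psInner (2 * l) s z z
      = psInner (2 * l) s (zpl z) (zpl z)
        + psInner (2 * l) s (z - zpl z) (z - zpl z) := by
    intro z
    have o1 : psInner (2 * l) s (zpl z) (z - zpl z) = 0 := horthPM _ _ (hPmzp z) (hPmzm z)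
    have o2 : psInner (2 * l) s (z - zpl z) (zpl z) = 0 := by rw [psInner_comm]; exact o1
    have key : psInner (2 * l) s (zpl z + (z - zpl z)) (zpl z + (z - zpl z))
        = psInner (2 * l) s z z := by rw [← hzdec z]
    rw [psInner_add_left, psInner_add_right, psInner_add_right, o1, o2] at key
    linarith
  have hMpdef : ∀ z, z ∈ Mp ↔ (psInner (2 * l) s z z = 1 ∧
      ∀ j ∈ Finset.Icc 1 m, psInner (2 * l) s (P j *ᵥ z) z = 0) := by
    intro z; rw [hMp]; exact Iff.rfl
  -- eigenspace locations of P i applied to the two parts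
  have hPzpE : ∀ i ∈ Finset.Icc 1 m, ∀ z, Pm *ᵥ (P i *ᵥ zpl z) = -(P i *ᵥ zpl z) :=
    fun i hi z => hEplus i hi _ (hPmzp z)
  have hPzmE : ∀ i ∈ Finset.Icc 1 m, ∀ z, Pm *ᵥ (P i *ᵥ (z - zpl z)) = P i *ᵥ (z - zpl z) :=
    fun i hi z => hEminus i hi _ (hPmzm z)
  -- the key orthogonality from membership in Mp
  have hzmorth : ∀ z ∈ Mp, ∀ i ∈ Finset.Icc 1 m,
      psInner (2 * l) s (P i *ᵥ zpl z) (z - zpl z) = 0 := by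
    intro z hz i hi
    have h0 := ((hMpdef z).mp hz).2 i hi
    have key : psInner (2 * l) s (P i *ᵥ (zpl z + (z - zpl z))) (zpl z + (z - zpl z)) = 0 := by
      rw [← hzdec z]; exact h0
    rw [Matrix.mulVec_add, psInner_add_left, psInner_add_right, psInner_add_right] at key
    have T1 : psInner (2 * l) s (P i *ᵥ zpl z) (zpl z) = 0 := by
      rw [psInner_comm]; exact horthPM _ _ (hPmzp z) (hPzpE i hi z)
    have T4 : psInner (2 * l) s (P i *ᵥ (z - zpl z)) (z - zpl z) = 0 :=
      horthPM _ _ (hPzmE i hi z) (hPmzm z)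
    have T3 : psInner (2 * l) s (P i *ᵥ (z - zpl z)) (zpl z)
        = psInner (2 * l) s (P i *ᵥ zpl z) (z - zpl z) := by
      rw [hPiAdj i hi, psInner_comm]
    rw [T1, T4, T3] at key
    linarith
  -- basic orthogonality facts
  have a1 : ∀ z, psInner (2 * l) s (zpl z) (z - zpl z) = 0 :=
    fun z => horthPM _ _ (hPmzp z) (hPmzm z)
  have a2 : ∀ i ∈ Finset.Icc 1 m, ∀ z, psInner (2 * l) s (zpl z) (P i *ᵥ zpl z) = 0 :=
    fun i hi z => horthPM _ _ (hPmzp z) (hPzpE i hi z)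
  have a3 : ∀ z ∈ Mp, ∀ i ∈ Finset.Icc 1 m,
      psInner (2 * l) s (zpl z) (P i *ᵥ (z - zpl z)) = 0 := by
    intro z hz i hi
    rw [← hPiAdj i hi]
    exact hzmorth z hz i hi
  have a5 : ∀ i ∈ Finset.Icc 1 m, ∀ z,
      psInner (2 * l) s (z - zpl z) (P i *ᵥ (z - zpl z)) = 0 := by
    intro i hi z
    rw [psInner_comm]
    exact horthPM _ _ (hPzmE i hi z) (hPmzm z)
  have a7 : ∀ i ∈ Finset.Icc 1 m, ∀ j ∈ Finset.Icc 1 m, ∀ z,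
      psInner (2 * l) s (P i *ᵥ zpl z) (P j *ᵥ (z - zpl z)) = 0 := by
    intro i hi j hj z
    rw [psInner_comm]
    exact horthPM _ _ (hPzmE j hj z) (hPzpE i hi z)
  -- the trichotomy
  have htri : ∀ z ∈ Mp, psInner (2 * l) s (zpl z) (zpl z) ≤ 0 ∨
      1 ≤ psInner (2 * l) s (zpl z) (zpl z) := by
    intro z hz
    by_contra hcon
    push_neg at hcon
    obtain ⟨hq0, hq1⟩ := hcon
    have hzz := ((hMpdef z).mp hz).1
    have hcpos : 0 < psInner (2 * l) s (z - zpl z) (z - zpl z) := by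
      have := hq_c z
      linarith
    classical
    let idx : Fin (m - r) → ℕ := fun k => r + 1 + (k : ℕ)
    have hidxm : ∀ k : Fin (m - r), idx k ∈ Finset.Icc 1 m := by
      intro k
      have := k.isLt
      simp only [Finset.mem_Icc, idx]
      omega
    have hidxr : ∀ k : Fin (m - r), r < idx k := by
      intro k; simp only [idx]; omega
    have hidxinj : ∀ k k' : Fin (m - r), k ≠ k' → idx k ≠ idx k' := by
      intro k k' hkk h
      exact hkk (Fin.ext (by simpa [idx] using h))
    let v : (Fin 2 ⊕ (Fin (m - r) ⊕ Fin (m - r))) → (Fin (2 * l) → ℝ) :=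
      Sum.elim (fun b => if b = 0 then zpl z else z - zpl z)
        (Sum.elim (fun k => P (idx k) *ᵥ zpl z) (fun k => P (idx k) *ᵥ (z - zpl z)))
    have hcard := card_le_of_pos_orth (n := 2 * l) (s := s) (le_of_lt hsn) v ?_ ?_
    rotate_left
    · -- orthogonality
      intro i j hij
      rcases i with bi | ki | ki <;> rcases j with bj | kj | kj
      · by_cases hbi : bi = 0 <;> by_cases hbj : bj = 0
        · exact absurd (by rw [show bi = bj from hbi.trans hbj.symm]) hij
        · simpa [v, hbi, hbj] using a1 z
        · rw [psInner_comm]; simpa [v, hbi, hbj] using a1 z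
        · exact absurd (by
            rw [show bi = bj from by omega]) hij
      · by_cases hbi : bi = 0
        · simpa [v, hbi] using a2 (idx kj) (hidxm kj) z
        · simpa [v, hbi] using (by
            rw [psInner_comm]
            exact hzmorth z hz (idx kj) (hidxm kj) :
              psInner (2 * l) s (z - zpl z) (P (idx kj) *ᵥ zpl z) = 0)
      · by_cases hbi : bi = 0
        · simpa [v, hbi] using a3 z hz (idx kj) (hidxm kj)
        · simpa [v, hbi] using a5 (idx kj) (hidxm kj) z
      · by_cases hbj : bj = 0
        · simpa [v, hbj] using (by
            rw [psInner_comm]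
            exact a2 (idx ki) (hidxm ki) z :
              psInner (2 * l) s (P (idx ki) *ᵥ zpl z) (zpl z) = 0)
        · simpa [v, hbj] using hzmorth z hz (idx ki) (hidxm ki)
      · have hkk : ki ≠ kj := fun h => hij (by rw [h])
        simpa [v] using hPiPj0 (idx ki) (hidxm ki) (idx kj) (hidxm kj)
          (hidxinj ki kj hkk) (zpl z)
      · simpa [v] using a7 (idx ki) (hidxm ki) (idx kj) (hidxm kj) z
      · by_cases hbj : bj = 0
        · simpa [v, hbj] using (by
            rw [psInner_comm]
            exact a3 z hz (idx ki) (hidxm ki) :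
              psInner (2 * l) s (P (idx ki) *ᵥ (z - zpl z)) (zpl z) = 0)
        · simpa [v, hbj] using (by
            rw [psInner_comm]
            exact a5 (idx ki) (hidxm ki) z :
              psInner (2 * l) s (P (idx ki) *ᵥ (z - zpl z)) (z - zpl z) = 0)
      · simpa [v] using (by
          rw [psInner_comm]
          exact a7 (idx kj) (hidxm kj) (idx ki) (hidxm ki) z :
            psInner (2 * l) s (P (idx ki) *ᵥ (z - zpl z)) (P (idx kj) *ᵥ zpl z) = 0)
      · have hkk : ki ≠ kj := fun h => hij (by rw [h])
        simpa [v] using hPiPj0 (idx ki) (hidxm ki) (idx kj) (hidxm kj)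
          (hidxinj ki kj hkk) (z - zpl z)
    · -- positivity
      intro i
      rcases i with b | k | k
      · by_cases hb : b = 0
        · simpa [v, hb] using hq0
        · simpa [v, hb] using hcpos
      · have := hPiPi (idx k) (hidxm k) (zpl z) (zpl z)
        rw [hetapos (idx k) (hidxr k), one_mul] at this
        simpa [v, this] using hq0
      · have := hPiPi (idx k) (hidxm k) (z - zpl z) (z - zpl z)
        rw [hetapos (idx k) (hidxr k), one_mul] at this
        simpa [v, this] using hcpos
    -- cardinality contradiction
    have hc2 : Fintype.card (Fin 2 ⊕ (Fin (m - r) ⊕ Fin (m - r)))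
        = 2 + ((m - r) + (m - r)) := by
      simp
    rw [hc2] at hcard
    rcases hcase with ⟨hr0, hsl⟩ | ⟨_, _, hsl, hlm, hmr⟩ <;> omega
  -- M3 empty and the union
  have hM3e : M3 = ∅ := by
    rw [hM3]
    ext z
    simp only [Set.mem_setOf_eq, Set.mem_empty_iff_false, iff_false, not_and]
    intro hz h12
    rcases htri z hz with h | h
    · exact fun h2 => absurd h12 (by linarith)
    · exact fun h2 => absurd h12 (by linarith)
  have hunion : Mp = M1 ∪ M2 := by
    rw [hM1, hM2]
    ext z
    constructor
    · intro hz
      rcases htri z hz with h | h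
      · right; exact ⟨hz, h⟩
      · left; exact ⟨hz, h⟩
    · rintro (⟨hz, _⟩ | ⟨hz, _⟩) <;> exact hz
  
  -- membership criteria
  have hmem1 : ∀ x, Pm *ᵥ x = x → psInner (2 * l) s x x = 1 → x ∈ M1 := by
    intro x hx h1
    have hzplx : zpl x = x := by
      rw [hzpl]
      simp only
      rw [hx]
      module
    have hMpx : x ∈ Mp := (hMpdef x).mpr ⟨h1, fun j hj => by
      rw [psInner_comm]
      exact horthPM _ _ hx (hEplus j hj x hx)⟩
    rw [hM1]
    exact ⟨hMpx, by rw [hzplx, h1]⟩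
  have hmem2 : ∀ y, Pm *ᵥ y = -y → psInner (2 * l) s y y = 1 → y ∈ M2 := by
    intro y hy h1
    have hzply : zpl y = 0 := by
      rw [hzpl]
      simp only
      rw [hy]
      module
    have hMpy : y ∈ Mp := (hMpdef y).mpr ⟨h1, fun j hj =>
      horthPM _ _ (hEminus j hj y hy) hy⟩
    rw [hM2]
    refine ⟨hMpy, ?_⟩
    rw [hzply, psInner_zero_left]
  -- normalization
  have hnormalize : ∀ w : Fin (2 * l) → ℝ, 0 < psInner (2 * l) s w w →
      psInner (2 * l) s ((Real.sqrt (psInner (2 * l) s w w))⁻¹ • w)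
        ((Real.sqrt (psInner (2 * l) s w w))⁻¹ • w) = 1 := by
    intro w hw
    rw [psInner_smul_left, psInner_smul_right]
    have hsq : Real.sqrt (psInner (2 * l) s w w) * Real.sqrt (psInner (2 * l) s w w)
        = psInner (2 * l) s w w := Real.mul_self_sqrt hw.le
    have hne : Real.sqrt (psInner (2 * l) s w w) ≠ 0 :=
      ne_of_gt (Real.sqrt_pos.mpr hw)
    field_simp
    rw [Real.sq_sqrt hw.le]
  have hmIcc : m ∈ Finset.Icc 1 m := by
    simp only [Finset.mem_Icc]
    omega
  -- transfer between eigenspaces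
  have htransPM : ∀ x, Pm *ᵥ x = x → psInner (2 * l) s x x = 1 →
      ∃ y, Pm *ᵥ y = -y ∧ psInner (2 * l) s y y = 1 := by
    intro x hx h1
    refine ⟨P m *ᵥ x, hEplus m hmIcc x hx, ?_⟩
    rw [hPiPi m hmIcc, hetapos m hrltm, one_mul, h1]
  have htransMP : ∀ y, Pm *ᵥ y = -y → psInner (2 * l) s y y = 1 →
      ∃ x, Pm *ᵥ x = x ∧ psInner (2 * l) s x x = 1 := by
    intro y hy h1
    refine ⟨P m *ᵥ y, hEminus m hmIcc y hy, ?_⟩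
    rw [hPiPi m hmIcc, hetapos m hrltm, one_mul, h1]
  -- existence of a unit-norm vector in E₊ and in E₋
  have hj0 : (2 * l - 1 : ℕ) < 2 * l := by omega
  have hexists : (∃ x, Pm *ᵥ x = x ∧ psInner (2 * l) s x x = 1) ∧
      (∃ y, Pm *ᵥ y = -y ∧ psInner (2 * l) s y y = 1) := by
    set e : Fin (2 * l) → ℝ := Pi.single ⟨2 * l - 1, hj0⟩ 1 with he
    have hee : psInner (2 * l) s e e = 1 := by
      rw [psInner_eq_sum, Finset.sum_eq_single (⟨2 * l - 1, hj0⟩ : Fin (2 * l))]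
      · have hnotlt : ¬(((⟨2 * l - 1, hj0⟩ : Fin (2 * l)) : ℕ) < s) := by
          change ¬(2 * l - 1 < s)
          omega
        rw [if_neg hnotlt, he]
        simp
      · intro b _ hb
        have hb0 : e b = 0 := by
          rw [he]
          exact Pi.single_eq_of_ne hb 1
        rw [hb0]
        ring
      · intro h
        exact absurd (Finset.mem_univ _) h
    have hsum := hq_c e
    rw [hee] at hsum
    rcases lt_or_ge 0 (psInner (2 * l) s (zpl e) (zpl e)) with hpe | hpe
    · -- E₊ part of e is positive
      have hxeig : Pm *ᵥ ((Real.sqrt (psInner (2 * l) s (zpl e) (zpl e)))⁻¹ • zpl e)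
          = (Real.sqrt (psInner (2 * l) s (zpl e) (zpl e)))⁻¹ • zpl e := by
        rw [Matrix.mulVec_smul, hPmzp]
      have hx1 := hnormalize (zpl e) hpe
      exact ⟨⟨_, hxeig, hx1⟩, htransPM _ hxeig hx1⟩
    · -- E₋ part of e is positive
      have hme : 0 < psInner (2 * l) s (e - zpl e) (e - zpl e) := by linarith
      have hyeig : Pm *ᵥ ((Real.sqrt (psInner (2 * l) s (e - zpl e) (e - zpl e)))⁻¹ • (e - zpl e))
          = -((Real.sqrt (psInner (2 * l) s (e - zpl e) (e - zpl e)))⁻¹ • (e - zpl e)) := by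
        rw [Matrix.mulVec_smul, hPmzm]
        rw [smul_neg]
      have hy1 := hnormalize (e - zpl e) hme
      exact ⟨htransMP _ hyeig hy1, ⟨_, hyeig, hy1⟩⟩
  obtain ⟨⟨xp, hxpE, hxp1⟩, ⟨ym, hymE, hym1⟩⟩ := hexists
  have hxpM1 : xp ∈ M1 := hmem1 xp hxpE hxp1
  have hymM2 : ym ∈ M2 := hmem2 ym hymE hym1
  
  -- generic path builder
  have mkJoined : ∀ (S : Set (Fin (2 * l) → ℝ)) (f : ℝ → (Fin (2 * l) → ℝ)),
      Continuous f → (∀ t, f t ∈ S) → JoinedIn S (f 0) (f 1) := by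
    intro S f hf hmem
    exact ⟨{ toFun := fun t => f t,
             continuous_toFun := hf.comp continuous_subtype_val,
             source' := by norm_num,
             target' := by norm_num }, fun t => hmem _⟩
  -- zpl of a combination
  have hzplcombo : ∀ (a b : ℝ) (u w : Fin (2 * l) → ℝ), Pm *ᵥ u = u → Pm *ᵥ w = -w →
      zpl (a • u + b • w) = a • u := by
    intro a b u w hu hw
    rw [hzpl]
    simp only
    rw [mulVec_combo, hu, hw]
    module
  -- rotation path
  have hrot : ∀ (S : Set (Fin (2 * l) → ℝ)) (ε : ℝ),
      (∀ w, Pm *ᵥ w = ε • w → psInner (2 * l) s w w = 1 → w ∈ S) →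
      ∀ x y θ, Pm *ᵥ x = ε • x → Pm *ᵥ y = ε • y →
      psInner (2 * l) s x x = 1 → psInner (2 * l) s y y = 1 →
      psInner (2 * l) s x y = 0 →
      JoinedIn S x (Real.cos θ • x + Real.sin θ • y) := by
    intro S ε hS x y θ hx hy h1 h2 h0
    have h0' : psInner (2 * l) s y x = 0 := by rw [psInner_comm]; exact h0
    have hcont : Continuous (fun t : ℝ => Real.cos (t * θ) • x + Real.sin (t * θ) • y) := by
      have hc1 : Continuous fun t : ℝ => Real.cos (t * θ) :=
        Real.continuous_cos.comp (continuous_id.mul continuous_const)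
      have hc2 : Continuous fun t : ℝ => Real.sin (t * θ) :=
        Real.continuous_sin.comp (continuous_id.mul continuous_const)
      exact (hc1.smul continuous_const).add (hc2.smul continuous_const)
    have hmem : ∀ t : ℝ, (Real.cos (t * θ) • x + Real.sin (t * θ) • y) ∈ S := by
      intro t
      apply hS
      · rw [mulVec_combo, hx, hy]
        module
      · rw [psInner_expand, h1, h2, h0, h0']
        linear_combination Real.sin_sq_add_cos_sq (t * θ)
    have key := mkJoined S _ hcont hmem
    simpa using key
  -- the complex structure T = P (r+1) ∘ P (r+2)
  have haI : r + 1 ∈ Finset.Icc 1 m := by simp only [Finset.mem_Icc]; omega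
  have hbI : r + 2 ∈ Finset.Icc 1 m := by simp only [Finset.mem_Icc]; omega
  have hTT : ∀ u w, psInner (2 * l) s (P (r+1) *ᵥ (P (r+2) *ᵥ u)) (P (r+1) *ᵥ (P (r+2) *ᵥ w))
      = psInner (2 * l) s u w := by
    intro u w
    rw [hPiPi (r+1) haI, hetapos (r+1) (by omega), one_mul,
      hPiPi (r+2) hbI, hetapos (r+2) (by omega), one_mul]
  have hTeig : ∀ (ε : ℝ) w, Pm *ᵥ w = ε • w →
      Pm *ᵥ (P (r+1) *ᵥ (P (r+2) *ᵥ w)) = ε • (P (r+1) *ᵥ (P (r+2) *ᵥ w)) := by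
    intro ε w hw
    have h2 := hantiV (r+2) hbI w
    rw [hw, Matrix.mulVec_smul] at h2
    have h2' : Pm *ᵥ (P (r+2) *ᵥ w) = -(ε • (P (r+2) *ᵥ w)) :=
      neg_eq_iff_eq_neg.mp h2.symm
    have h1 := hantiV (r+1) haI (P (r+2) *ᵥ w)
    rw [h2', Matrix.mulVec_neg, Matrix.mulVec_smul] at h1
    have h1' := neg_inj.mp h1
    exact h1'.symm
  have hTorth : ∀ w, psInner (2 * l) s (P (r+1) *ᵥ (P (r+2) *ᵥ w)) w = 0 := by
    intro w
    rw [hPiAdj (r+1) haI]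
    exact hPiPj0 (r+2) hbI (r+1) haI (by omega) w
  have hTorth' : ∀ w, psInner (2 * l) s w (P (r+1) *ᵥ (P (r+2) *ᵥ w)) = 0 := by
    intro w
    rw [psInner_comm]
    exact hTorth w
  -- connecting two unit vectors in the same eigenspace
  have hsph : ∀ (S : Set (Fin (2 * l) → ℝ)) (ε : ℝ),
      (∀ w, Pm *ᵥ w = ε • w → psInner (2 * l) s w w = 1 → w ∈ S) →
      ∀ x y, Pm *ᵥ x = ε • x → psInner (2 * l) s x x = 1 →
      Pm *ᵥ y = ε • y → psInner (2 * l) s y y = 1 →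
      JoinedIn S x y := by
    intro S ε hS x y hx h1 hy h2
    by_cases hα : psInner (2 * l) s x y = 0
    · have j := hrot S ε hS x y (Real.pi/2) hx hy h1 h2 hα
      simpa [Real.cos_pi_div_two, Real.sin_pi_div_two] using j
    · set Tx := P (r+1) *ᵥ (P (r+2) *ᵥ x) with hTx
      set Ty := P (r+1) *ᵥ (P (r+2) *ᵥ y) with hTy
      set α := psInner (2 * l) s x y with hαdef
      set β := psInner (2 * l) s Tx y with hβdef
      set v0 : ℝ := -(β / α) with hv0
      set θ := Real.arctan v0 with hθ
      have hTx_eig : Pm *ᵥ Tx = ε • Tx := hTeig ε x hx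
      have hTy_eig : Pm *ᵥ Ty = ε • Ty := hTeig ε y hy
      have hTx1 : psInner (2 * l) s Tx Tx = 1 := by rw [hTx, hTT, h1]
      have hTy1 : psInner (2 * l) s Ty Ty = 1 := by rw [hTy, hTT, h2]
      have hxTx : psInner (2 * l) s x Tx = 0 := hTorth' x
      have hyTy : psInner (2 * l) s y Ty = 0 := hTorth' y
      have hTyy : psInner (2 * l) s Ty y = 0 := hTorth y
      have hTxTy : psInner (2 * l) s Tx Ty = α := by rw [hTx, hTy, hTT]
      have j1 : JoinedIn S x Tx := by
        have := hrot S ε hS x Tx (Real.pi/2) hx hTx_eig h1 hTx1 hxTx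
        simpa [Real.cos_pi_div_two, Real.sin_pi_div_two] using this
      have j2 : JoinedIn S y (Real.cos θ • y + Real.sin θ • Ty) :=
        hrot S ε hS y Ty θ hy hTy_eig h2 hTy1 hyTy
      have hy'_eig : Pm *ᵥ (Real.cos θ • y + Real.sin θ • Ty)
          = ε • (Real.cos θ • y + Real.sin θ • Ty) := by
        rw [mulVec_combo, hy, hTy_eig]
        module
      have hy'1 : psInner (2 * l) s (Real.cos θ • y + Real.sin θ • Ty)
          (Real.cos θ • y + Real.sin θ • Ty) = 1 := by
        rw [psInner_expand, h2, hTy1, hyTy, hTyy]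
        linear_combination Real.sin_sq_add_cos_sq θ
      have horthTxy' : psInner (2 * l) s Tx (Real.cos θ • y + Real.sin θ • Ty) = 0 := by
        rw [psInner_add_right, psInner_smul_right, psInner_smul_right, ← hβdef, hTxTy]
        rw [hθ, Real.cos_arctan, Real.sin_arctan, hv0]
        have hden : Real.sqrt (1 + (-(β / α))^2) ≠ 0 := by
          positivity
        field_simp
        ring
      have j3 : JoinedIn S Tx (Real.cos θ • y + Real.sin θ • Ty) := by
        have := hrot S ε hS Tx (Real.cos θ • y + Real.sin θ • Ty) (Real.pi/2)
          hTx_eig hy'_eig hTx1 hy'1 horthTxy'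
        simpa [Real.cos_pi_div_two, Real.sin_pi_div_two] using this
      exact (j1.trans j3).trans j2.symm
  
  have mkJoined' : ∀ (S : Set (Fin (2 * l) → ℝ)) (f : ℝ → (Fin (2 * l) → ℝ))
      (A B : Fin (2 * l) → ℝ), Continuous f → (∀ t, f t ∈ S) →
      f 0 = A → f 1 = B → JoinedIn S A B := by
    intro S f A B hf hm h0 h1
    rw [← h0, ← h1]
    exact mkJoined S f hf hm
  -- membership of combinations
  have hcombo_mem : ∀ z ∈ Mp, ∀ a b : ℝ,
      a * a * psInner (2 * l) s (zpl z) (zpl z)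
        + b * b * psInner (2 * l) s (z - zpl z) (z - zpl z) = 1 →
      (a • zpl z + b • (z - zpl z)) ∈ Mp ∧
        zpl (a • zpl z + b • (z - zpl z)) = a • zpl z := by
    intro z hz a b hab
    have o2 : psInner (2 * l) s (z - zpl z) (zpl z) = 0 := by
      rw [psInner_comm]; exact a1 z
    constructor
    · refine (hMpdef _).mpr ⟨?_, ?_⟩
      · rw [psInner_expand, a1 z, o2]
        linear_combination hab
      · intro j hj
        have b1 : psInner (2 * l) s (P j *ᵥ zpl z) (zpl z) = 0 := by
          rw [psInner_comm]; exact a2 j hj z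
        have b2 : psInner (2 * l) s (P j *ᵥ zpl z) (z - zpl z) = 0 := hzmorth z hz j hj
        have b3 : psInner (2 * l) s (P j *ᵥ (z - zpl z)) (zpl z) = 0 := by
          rw [psInner_comm]; exact a3 z hz j hj
        have b4 : psInner (2 * l) s (P j *ᵥ (z - zpl z)) (z - zpl z) = 0 := by
          rw [psInner_comm]; exact a5 j hj z
        rw [mulVec_combo, psInner_expand, b1, b2, b3, b4]
        ring
    · exact hzplcombo a b _ _ (hPmzp z) (hPmzm z)
  -- retraction of M1 to the unit sphere of E₊
  have hret1 : ∀ z ∈ M1, ∃ x, (Pm *ᵥ x = x ∧ psInner (2 * l) s x x = 1) ∧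
      JoinedIn M1 z x := by
    intro z hz
    rw [hM1] at hz
    obtain ⟨hzMp, hq1⟩ := hz
    have hzz1 := ((hMpdef z).mp hzMp).1
    have hsum := hq_c z
    obtain ⟨q, hq⟩ : ∃ q, psInner (2 * l) s (zpl z) (zpl z) = q := ⟨_, rfl⟩
    obtain ⟨c, hc⟩ : ∃ c, psInner (2 * l) s (z - zpl z) (z - zpl z) = c := ⟨_, rfl⟩
    rw [hq] at hq1
    rw [hq, hc, hzz1] at hsum
    have hqpos : 0 < q := by linarith
    have hqne : q ≠ 0 := ne_of_gt hqpos
    have hcle : c ≤ 0 := by linarith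
    have hA : ∀ t : ℝ, 1 ≤ 1 - (1-t)^2 * c := by
      intro t; nlinarith [sq_nonneg (1-t)]
    have hg2 : ∀ t : ℝ, Real.sqrt ((1 - (1-t)^2 * c)/q) * Real.sqrt ((1 - (1-t)^2 * c)/q)
        = (1 - (1-t)^2 * c)/q := fun t =>
      Real.mul_self_sqrt (div_nonneg (by linarith [hA t]) hqpos.le)
    have hmemf : ∀ t : ℝ,
        (Real.sqrt ((1 - (1-t)^2 * c)/q) • zpl z + (1-t) • (z - zpl z)) ∈ M1 := by
      intro t
      have hab : Real.sqrt ((1 - (1-t)^2 * c)/q) * Real.sqrt ((1 - (1-t)^2 * c)/q) * q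
          + (1-t) * (1-t) * c = 1 := by
        rw [hg2 t, div_mul_cancel₀ _ hqne]
        ring
      obtain ⟨hMpmem, hzplf⟩ := hcombo_mem z hzMp _ _ (by rw [hq, hc]; exact hab)
      rw [hM1]
      refine ⟨hMpmem, ?_⟩
      rw [hzplf, psInner_smul_left, psInner_smul_right, hq, ← mul_assoc, hg2 t,
        div_mul_cancel₀ _ hqne]
      linarith [hA t]
    have hcontf : Continuous (fun t : ℝ =>
        Real.sqrt ((1 - (1-t)^2 * c)/q) • zpl z + (1-t) • (z - zpl z)) := by
      have h1 : Continuous fun t : ℝ => (1 - (1-t)^2 * c)/q :=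
        (continuous_const.sub (((continuous_const.sub continuous_id).pow 2).mul
          continuous_const)).div_const q
      exact ((Real.continuous_sqrt.comp h1).smul continuous_const).add
        ((continuous_const.sub continuous_id).smul continuous_const)
    refine ⟨Real.sqrt (1/q) • zpl z, ⟨?_, ?_⟩, ?_⟩
    · rw [Matrix.mulVec_smul, hPmzp]
    · rw [psInner_smul_left, psInner_smul_right, hq, ← mul_assoc,
        Real.mul_self_sqrt (by positivity : (0:ℝ) ≤ 1/q)]
      field_simp
    · refine mkJoined' M1 _ z _ hcontf hmemf ?_ ?_
      · have hsq0 : (1 - (1-(0:ℝ))^2 * c)/q = 1 := by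
          field_simp
          linarith
        show Real.sqrt ((1 - (1-(0:ℝ))^2 * c)/q) • zpl z + (1-(0:ℝ)) • (z - zpl z) = z
        rw [hsq0, Real.sqrt_one]
        norm_num
      · show Real.sqrt ((1 - (1-(1:ℝ))^2 * c)/q) • zpl z + (1-(1:ℝ)) • (z - zpl z)
          = Real.sqrt (1/q) • zpl z
        norm_num
  -- retraction of M2 to the unit sphere of E₋
  have hret2 : ∀ z ∈ M2, ∃ y, (Pm *ᵥ y = -y ∧ psInner (2 * l) s y y = 1) ∧
      JoinedIn M2 z y := by
    intro z hz
    rw [hM2] at hz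
    obtain ⟨hzMp, hq1⟩ := hz
    have hzz1 := ((hMpdef z).mp hzMp).1
    have hsum := hq_c z
    obtain ⟨q, hq⟩ : ∃ q, psInner (2 * l) s (zpl z) (zpl z) = q := ⟨_, rfl⟩
    obtain ⟨c, hc⟩ : ∃ c, psInner (2 * l) s (z - zpl z) (z - zpl z) = c := ⟨_, rfl⟩
    rw [hq] at hq1
    rw [hq, hc, hzz1] at hsum
    have hcpos : 0 < c := by linarith
    have hcne : c ≠ 0 := ne_of_gt hcpos
    have hA : ∀ t : ℝ, 1 ≤ 1 - (1-t)^2 * q := by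
      intro t; nlinarith [sq_nonneg (1-t)]
    have hg2 : ∀ t : ℝ, Real.sqrt ((1 - (1-t)^2 * q)/c) * Real.sqrt ((1 - (1-t)^2 * q)/c)
        = (1 - (1-t)^2 * q)/c := fun t =>
      Real.mul_self_sqrt (div_nonneg (by linarith [hA t]) hcpos.le)
    have hmemf : ∀ t : ℝ,
        ((1-t) • zpl z + Real.sqrt ((1 - (1-t)^2 * q)/c) • (z - zpl z)) ∈ M2 := by
      intro t
      have hab : (1-t) * (1-t) * q
          + Real.sqrt ((1 - (1-t)^2 * q)/c) * Real.sqrt ((1 - (1-t)^2 * q)/c) * c = 1 := by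
        rw [hg2 t, div_mul_cancel₀ _ hcne]
        ring
      obtain ⟨hMpmem, hzplf⟩ := hcombo_mem z hzMp _ _ (by rw [hq, hc]; exact hab)
      rw [hM2]
      refine ⟨hMpmem, ?_⟩
      rw [hzplf, psInner_smul_left, psInner_smul_right, hq]
      nlinarith [mul_self_nonneg (1-t)]
    have hcontf : Continuous (fun t : ℝ =>
        (1-t) • zpl z + Real.sqrt ((1 - (1-t)^2 * q)/c) • (z - zpl z)) := by
      have h1 : Continuous fun t : ℝ => (1 - (1-t)^2 * q)/c :=
        (continuous_const.sub (((continuous_const.sub continuous_id).pow 2).mul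
          continuous_const)).div_const c
      exact ((continuous_const.sub continuous_id).smul continuous_const).add
        ((Real.continuous_sqrt.comp h1).smul continuous_const)
    refine ⟨Real.sqrt (1/c) • (z - zpl z), ⟨?_, ?_⟩, ?_⟩
    · rw [Matrix.mulVec_smul, hPmzm, smul_neg]
    · rw [psInner_smul_left, psInner_smul_right, hc, ← mul_assoc,
        Real.mul_self_sqrt (by positivity : (0:ℝ) ≤ 1/c)]
      field_simp
    · refine mkJoined' M2 _ z _ hcontf hmemf ?_ ?_
      · have hsq0 : (1 - (1-(0:ℝ))^2 * q)/c = 1 := by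
          field_simp
          linarith
        show (1-(0:ℝ)) • zpl z + Real.sqrt ((1 - (1-(0:ℝ))^2 * q)/c) • (z - zpl z) = z
        rw [hsq0, Real.sqrt_one]
        norm_num
      · show (1-(1:ℝ)) • zpl z + Real.sqrt ((1 - (1-(1:ℝ))^2 * q)/c) • (z - zpl z)
          = Real.sqrt (1/c) • (z - zpl z)
        norm_num
  -- path-connectedness
  have hPC1 : IsPathConnected M1 := by
    refine ⟨xp, hxpM1, ?_⟩
    intro z hz
    obtain ⟨x, ⟨hx1, hx2⟩, hJ⟩ := hret1 z hz
    have hS1 : ∀ w, Pm *ᵥ w = (1:ℝ) • w → psInner (2 * l) s w w = 1 → w ∈ M1 := by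
      intro w hw h1
      rw [one_smul] at hw
      exact hmem1 w hw h1
    have j := hsph M1 1 hS1 xp x (by rw [one_smul]; exact hxpE) hxp1
      (by rw [one_smul]; exact hx1) hx2
    exact j.trans hJ.symm
  have hPC2 : IsPathConnected M2 := by
    refine ⟨ym, hymM2, ?_⟩
    intro z hz
    obtain ⟨y, ⟨hy1, hy2⟩, hJ⟩ := hret2 z hz
    have hS2 : ∀ w, Pm *ᵥ w = (-1:ℝ) • w → psInner (2 * l) s w w = 1 → w ∈ M2 := by
      intro w hw h1
      rw [neg_one_smul] at hw
      exact hmem2 w hw h1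
    have j := hsph M2 (-1) hS2 ym y (by rw [neg_one_smul]; exact hymE) hym1
      (by rw [neg_one_smul]; exact hy1) hy2
    exact j.trans hJ.symm
  
  -- continuity of the eigen-norm function
  have hcontPm : Continuous fun z : Fin (2 * l) → ℝ => Pm *ᵥ z := by
    refine continuous_pi fun j => ?_
    simp only [Matrix.mulVec, dotProduct]
    exact continuous_finset_sum _ fun k _ => continuous_const.mul (continuous_apply k)
  have hcontzpl : Continuous zpl := by
    rw [hzpl]
    exact (continuous_const (y := (1 / 2 : ℝ))).smul (continuous_id.add hcontPm)
  have hcontF : Continuous fun z => psInner (2 * l) s (zpl z) (zpl z) := by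
    have heq : (fun z => psInner (2 * l) s (zpl z) (zpl z))
        = fun z => ∑ j : Fin (2 * l),
            (if (j : ℕ) < s then (-1:ℝ) else 1) * zpl z j * zpl z j :=
      funext fun z => psInner_eq_sum _ _
    rw [heq]
    exact continuous_finset_sum _ fun j _ =>
      (continuous_const.mul ((continuous_apply j).comp hcontzpl)).mul
        ((continuous_apply j).comp hcontzpl)
  -- open separation
  have hU : IsOpen ((fun z => psInner (2 * l) s (zpl z) (zpl z)) ⁻¹' Set.Ioi (1/2)) :=
    isOpen_Ioi.preimage hcontF
  have hW : IsOpen ((fun z => psInner (2 * l) s (zpl z) (zpl z)) ⁻¹' Set.Iio (1/2)) :=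
    isOpen_Iio.preimage hcontF
  have hsub : Mp ⊆ ((fun z => psInner (2 * l) s (zpl z) (zpl z)) ⁻¹' Set.Ioi (1/2)) ∪
      ((fun z => psInner (2 * l) s (zpl z) (zpl z)) ⁻¹' Set.Iio (1/2)) := by
    intro z hz
    rcases htri z hz with h | h
    · right
      simp only [Set.mem_preimage, Set.mem_Iio]
      linarith
    · left
      simp only [Set.mem_preimage, Set.mem_Ioi]
      linarith
  have hxpU : xp ∈ (fun z => psInner (2 * l) s (zpl z) (zpl z)) ⁻¹' Set.Ioi (1/2) := by
    have := hxpM1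
    rw [hM1] at this
    simp only [Set.mem_preimage, Set.mem_Ioi]
    linarith [this.2]
  have hymW : ym ∈ (fun z => psInner (2 * l) s (zpl z) (zpl z)) ⁻¹' Set.Iio (1/2) := by
    have := hymM2
    rw [hM2] at this
    simp only [Set.mem_preimage, Set.mem_Iio]
    linarith [this.2]
  have hxpMp : xp ∈ Mp := by
    have := hxpM1; rw [hM1] at this; exact this.1
  have hymMp : ym ∈ Mp := by
    have := hymM2; rw [hM2] at this; exact this.1
  have hnotpre : ¬ IsPreconnected Mp := by
    intro h
    obtain ⟨w, hwMp, hwU, hwW⟩ := h _ _ hU hW hsub ⟨xp, hxpMp, hxpU⟩ ⟨ym, hymMp, hymW⟩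
    simp only [Set.mem_preimage, Set.mem_Ioi, Set.mem_Iio] at hwU hwW
    linarith
  -- membership in the open sets from M1/M2
  have hM1U : ∀ w ∈ M1, w ∈ (fun z => psInner (2 * l) s (zpl z) (zpl z)) ⁻¹' Set.Ioi (1/2) := by
    intro w hw
    rw [hM1] at hw
    simp only [Set.mem_preimage, Set.mem_Ioi]
    linarith [hw.2]
  have hM2W : ∀ w ∈ M2, w ∈ (fun z => psInner (2 * l) s (zpl z) (zpl z)) ⁻¹' Set.Iio (1/2) := by
    intro w hw
    rw [hM2] at hw
    simp only [Set.mem_preimage, Set.mem_Iio]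
    linarith [hw.2]
  have hM1sub : M1 ⊆ Mp := by
    rw [hM1]; exact fun w hw => hw.1
  have hM2sub : M2 ⊆ Mp := by
    rw [hM2]; exact fun w hw => hw.1
  -- connected components
  have hcomp1 : ∀ z ∈ M1, connectedComponentIn Mp z = M1 := by
    intro z hz
    apply Set.Subset.antisymm
    · intro w hw
      by_contra hwM1
      have hwMp : w ∈ Mp := connectedComponentIn_subset Mp z hw
      have hwM2 : w ∈ M2 := by
        rw [hunion] at hwMp
        rcases hwMp with h | h
        · exact absurd h hwM1
        · exact h
      have hpre : IsPreconnected (connectedComponentIn Mp z) :=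
        isPreconnected_connectedComponentIn
      have hzC : z ∈ connectedComponentIn Mp z :=
        mem_connectedComponentIn (hM1sub hz)
      obtain ⟨p, _, hpU, hpW⟩ := hpre _ _ hU hW
        ((connectedComponentIn_subset Mp z).trans hsub)
        ⟨z, hzC, hM1U z hz⟩ ⟨w, hw, hM2W w hwM2⟩
      simp only [Set.mem_preimage, Set.mem_Ioi, Set.mem_Iio] at hpU hpW
      linarith
    · exact hPC1.isConnected.isPreconnected.subset_connectedComponentIn hz hM1sub
  have hcomp2 : ∀ z ∈ M2, connectedComponentIn Mp z = M2 := by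
    intro z hz
    apply Set.Subset.antisymm
    · intro w hw
      by_contra hwM2
      have hwMp : w ∈ Mp := connectedComponentIn_subset Mp z hw
      have hwM1 : w ∈ M1 := by
        rw [hunion] at hwMp
        rcases hwMp with h | h
        · exact h
        · exact absurd h hwM2
      have hpre : IsPreconnected (connectedComponentIn Mp z) :=
        isPreconnected_connectedComponentIn
      have hzC : z ∈ connectedComponentIn Mp z :=
        mem_connectedComponentIn (hM2sub hz)
      obtain ⟨p, _, hpU, hpW⟩ := hpre _ _ hU hW
        ((connectedComponentIn_subset Mp z).trans hsub)
        ⟨w, hw, hM1U w hwM1⟩ ⟨z, hzC, hM2W z hz⟩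
      simp only [Set.mem_preimage, Set.mem_Ioi, Set.mem_Iio] at hpU hpW
      linarith
    · exact hPC2.isConnected.isPreconnected.subset_connectedComponentIn hz hM2sub
  exact ⟨hnotpre, hM3e, hunion, ⟨xp, hxpM1⟩, ⟨ym, hymM2⟩, hPC1, hPC2, hcomp1, hcomp2⟩
end
end

section
/- Let P_1, …, P_m be a Clifford system of signature (m, r) on ℝ^{2l}_s with m ≡ 0 (mod 4), r = m, and s = l ≤ 2l − 1, and set P := P_1P_2⋯P_m. If the restriction of ⟨·,·⟩ to E_+(P) is positive definite (case (c-1), i.e. (s₁, s₂) = (0, l)), then M_+ = M_{+,1} and M_+ is connected. If instead the restriction of ⟨·,·⟩ to E_+(P) is negative definite (case (c-2), i.e. (s₁, s₂) = (l, 0)), then M_+ = M_{+,2} and M_+ is connected. -/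
open Matrix

noncomputable section

namespace CliffAux
variable {n s m : ℕ} {P : ℕ → Matrix (Fin n) (Fin n) ℝ}


lemma psInner_eq_sum (n s : ℕ) (u v : Fin n → ℝ) :
    psInner n s u v = ∑ i, u i * ((if (i : ℕ) < s then (-1:ℝ) else 1) * v i) := by
  unfold psInner psJ dotProduct
  refine Finset.sum_congr rfl fun i _ => ?_
  rw [mulVec_diagonal]

lemma psInner_symm (n s : ℕ) (u v : Fin n → ℝ) :
    psInner n s u v = psInner n s v u := by
  simp only [psInner_eq_sum]
  exact Finset.sum_congr rfl fun i _ => by ring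

lemma psInner_add_left (n s : ℕ) (u v w : Fin n → ℝ) :
    psInner n s (u + v) w = psInner n s u w + psInner n s v w := by
  simp only [psInner_eq_sum, ← Finset.sum_add_distrib]
  refine Finset.sum_congr rfl fun i _ => ?_
  simp only [Pi.add_apply]
  split_ifs <;> ring

lemma psInner_add_right (n s : ℕ) (u v w : Fin n → ℝ) :
    psInner n s u (v + w) = psInner n s u v + psInner n s u w := by
  rw [psInner_symm, psInner_add_left, psInner_symm n s v, psInner_symm n s w]

lemma psInner_smul_left (n s : ℕ) (c : ℝ) (u v : Fin n → ℝ) :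
    psInner n s (c • u) v = c * psInner n s u v := by
  simp only [psInner_eq_sum, Finset.mul_sum]
  refine Finset.sum_congr rfl fun i _ => ?_
  simp only [Pi.smul_apply, smul_eq_mul]
  split_ifs <;> ring

lemma psInner_smul_right (n s : ℕ) (c : ℝ) (u v : Fin n → ℝ) :
    psInner n s u (c • v) = c * psInner n s u v := by
  rw [psInner_symm, psInner_smul_left, psInner_symm]

lemma psInner_zero_left (n s : ℕ) (v : Fin n → ℝ) : psInner n s 0 v = 0 := by
  have := psInner_smul_left n s 0 0 v
  simpa using this

lemma psInner_neg_left (n s : ℕ) (u v : Fin n → ℝ) :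
    psInner n s (-u) v = -psInner n s u v := by
  have := psInner_smul_left n s (-1) u v
  simpa using this

lemma psInner_neg_right (n s : ℕ) (u v : Fin n → ℝ) :
    psInner n s u (-v) = -psInner n s u v := by
  rw [psInner_symm, psInner_neg_left, psInner_symm]

lemma psJ_mul_psJ (n s : ℕ) : psJ n s * psJ n s = 1 := by
  unfold psJ
  rw [diagonal_mul_diagonal]
  have : (fun i : Fin n => (if (i:ℕ) < s then (-1:ℝ) else 1) * (if (i:ℕ) < s then (-1:ℝ) else 1))
      = fun _ => (1:ℝ) := by
    funext i; split_ifs <;> ring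
  rw [this, diagonal_one]

lemma psJ_entry (n s : ℕ) (A : Matrix (Fin n) (Fin n) ℝ)
    (hA : Aᵀ = psJ n s * A * psJ n s) (i j : Fin n) :
    A j i = (if (i:ℕ) < s then (-1:ℝ) else 1) * A i j * (if (j:ℕ) < s then (-1:ℝ) else 1) := by
  have h := congrFun (congrFun hA i) j
  simp only [transpose_apply, psJ, Matrix.mul_diagonal, Matrix.diagonal_mul] at h
  exact h

/-- symmetry w.r.t. the pseudo inner product -/
lemma psInner_mulVec (n s : ℕ) (A : Matrix (Fin n) (Fin n) ℝ)
    (hA : Aᵀ = psJ n s * A * psJ n s) (u v : Fin n → ℝ) :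
    psInner n s (A *ᵥ u) v = psInner n s u (A *ᵥ v) := by
  simp only [psInner_eq_sum, mulVec, dotProduct, Finset.sum_mul, Finset.mul_sum]
  rw [Finset.sum_comm]
  refine Finset.sum_congr rfl fun i _ => Finset.sum_congr rfl fun j _ => ?_
  rw [psJ_entry n s A hA i j]
  split_ifs <;> ring

lemma continuous_psInner (n s : ℕ) :
    Continuous fun p : (Fin n → ℝ) × (Fin n → ℝ) => psInner n s p.1 p.2 := by
  simp only [psInner_eq_sum]
  apply continuous_finset_sum
  intro i _
  fun_prop


def eps (k : ℕ) : ℝ := if k % 4 = 0 ∨ k % 4 = 3 then 1 else -1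

lemma eps_succ (k : ℕ) : eps (k + 1) = (-1 : ℝ)^(k+1) * eps k := by
  have hp : (-1:ℝ)^(k+1) = if (k+1) % 2 = 0 then 1 else -1 := by
    rcases Nat.even_or_odd (k+1) with h | h
    · rw [h.neg_one_pow, if_pos (Nat.even_iff.mp h)]
    · rw [h.neg_one_pow, if_neg (by have := Nat.odd_iff.mp h; omega)]
  have h4 : k % 4 = 0 ∨ k % 4 = 1 ∨ k % 4 = 2 ∨ k % 4 = 3 := by omega
  unfold eps
  rcases h4 with h | h | h | h <;>
    · rw [hp]
      have h1 : (k+1) % 4 = (k % 4 + 1) % 4 := by omega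
      have h2 : (k+1) % 2 = (k % 2 + 1) % 2 := by omega
      have h3 : k % 2 = k % 4 % 2 := by omega
      rw [h1, h2, h3, h]
      norm_num

lemma eps_of_mod_four (k : ℕ) (hk : k % 4 = 0) : eps k = 1 := by
  unfold eps; rw [if_pos (Or.inl hk)]

section
variable (hrel : ∀ i ∈ Finset.Icc 1 m, ∀ j ∈ Finset.Icc 1 m,
    P i * P j + P j * P i = (2 * cliffEta m i j) • (1 : Matrix (Fin n) (Fin n) ℝ))
include hrel

lemma P_sq {i : ℕ} (hi : i ∈ Finset.Icc 1 m) : P i * P i = -1 := by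
  have h := hrel i hi i hi
  have him : i ≤ m := (Finset.mem_Icc.mp hi).2
  rw [cliffEta, if_pos rfl, if_pos him] at h
  have h2 : (2:ℝ) • (P i * P i) = (2:ℝ) • (-1 : Matrix (Fin n) (Fin n) ℝ) := by
    rw [two_smul]
    rw [h]
    norm_num
  exact smul_right_injective _ (by norm_num : (2:ℝ) ≠ 0) h2

lemma P_anti {i j : ℕ} (hi : i ∈ Finset.Icc 1 m) (hj : j ∈ Finset.Icc 1 m) (hij : i ≠ j) :
    P i * P j = -(P j * P i) := by
  have h := hrel i hi j hj
  rw [cliffEta, if_neg hij] at h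
  rw [eq_neg_iff_add_eq_zero]
  rw [h]
  norm_num

lemma prod_mul_P {L : List ℕ} (hL : ∀ i ∈ L, i ∈ Finset.Icc 1 m) {j : ℕ}
    (hj : j ∈ Finset.Icc 1 m) (hjL : j ∉ L) :
    (L.map P).prod * P j = ((-1:ℝ)^L.length) • (P j * (L.map P).prod) := by
  induction L with
  | nil => simp
  | cons a t ih =>
    have haj : a ≠ j := fun h => hjL (h ▸ (by simp : a ∈ a :: t))
    have ha : a ∈ Finset.Icc 1 m := hL a ((by simp : a ∈ a :: t))
    have ht : ∀ i ∈ t, i ∈ Finset.Icc 1 m := fun i hi => hL i (List.mem_cons_of_mem a hi)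
    have hjt : j ∉ t := fun h => hjL (List.mem_cons_of_mem a h)
    simp only [List.map_cons, List.prod_cons, List.length_cons]
    rw [Matrix.mul_assoc, ih ht hjt, mul_smul_comm, ← Matrix.mul_assoc,
      P_anti hrel ha hj haj, pow_succ]
    rw [neg_mul, Matrix.mul_assoc]
    module

lemma prod_mul_P_mem {L : List ℕ} (hL : ∀ i ∈ L, i ∈ Finset.Icc 1 m) (hnd : L.Nodup)
    {j : ℕ} (hjL : j ∈ L) :
    (L.map P).prod * P j = ((-1:ℝ)^(L.length + 1)) • (P j * (L.map P).prod) := by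
  induction L with
  | nil => simp at hjL
  | cons a t ih =>
    have ha : a ∈ Finset.Icc 1 m := hL a ((by simp : a ∈ a :: t))
    have ht : ∀ i ∈ t, i ∈ Finset.Icc 1 m := fun i hi => hL i (List.mem_cons_of_mem a hi)
    simp only [List.map_cons, List.prod_cons, List.length_cons]
    rcases List.mem_cons.mp hjL with rfl | hjt
    · have hjt : j ∉ t := (List.nodup_cons.mp hnd).1
      rw [Matrix.mul_assoc, prod_mul_P hrel ht ha hjt, mul_smul_comm, ← Matrix.mul_assoc]
      rw [pow_succ, pow_succ]
      module
    · have hja : j ≠ a := fun h => (List.nodup_cons.mp hnd).1 (h ▸ hjt)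
      rw [Matrix.mul_assoc, ih ht (List.nodup_cons.mp hnd).2 hjt, mul_smul_comm,
        ← Matrix.mul_assoc, P_anti hrel ha (hL j hjL) (Ne.symm hja)]
      rw [neg_mul, Matrix.mul_assoc, pow_succ (-1:ℝ) (t.length + 1)]
      module

lemma prod_sq {L : List ℕ} (hL : ∀ i ∈ L, i ∈ Finset.Icc 1 m) (hnd : L.Nodup) :
    (L.map P).prod * (L.map P).prod = eps L.length • 1 := by
  induction L with
  | nil => simp [eps]
  | cons a t ih =>
    have ha : a ∈ Finset.Icc 1 m := hL a ((by simp : a ∈ a :: t))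
    have ht : ∀ i ∈ t, i ∈ Finset.Icc 1 m := fun i hi => hL i (List.mem_cons_of_mem a hi)
    have hat : a ∉ t := (List.nodup_cons.mp hnd).1
    simp only [List.map_cons, List.prod_cons, List.length_cons]
    rw [Matrix.mul_assoc, ← Matrix.mul_assoc (List.map P t).prod, prod_mul_P hrel ht ha hat,
      smul_mul_assoc, mul_smul_comm, Matrix.mul_assoc, ← Matrix.mul_assoc (P a),
      ih ht (List.nodup_cons.mp hnd).2]
    rw [mul_smul_comm, Matrix.mul_one, P_sq hrel ha, eps_succ, pow_succ]
    module

end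
section
variable (hsym : ∀ i ∈ Finset.Icc 1 m, (P i)ᵀ = psJ n s * P i * psJ n s)
    (hrel : ∀ i ∈ Finset.Icc 1 m, ∀ j ∈ Finset.Icc 1 m,
      P i * P j + P j * P i = (2 * cliffEta m i j) • (1 : Matrix (Fin n) (Fin n) ℝ))

include hrel in
lemma P_sq_vec {i : ℕ} (hi : i ∈ Finset.Icc 1 m) (v : Fin n → ℝ) :
    P i *ᵥ (P i *ᵥ v) = -v := by
  rw [mulVec_mulVec, P_sq hrel hi, neg_mulVec, one_mulVec]

include hsym in
lemma P_symmv {i : ℕ} (hi : i ∈ Finset.Icc 1 m) (u v : Fin n → ℝ) :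
    psInner n s (P i *ᵥ u) v = psInner n s u (P i *ᵥ v) :=
  psInner_mulVec n s (P i) (hsym i hi) u v

include hsym hrel in
lemma P_anti_iso {i : ℕ} (hi : i ∈ Finset.Icc 1 m) (u v : Fin n → ℝ) :
    psInner n s (P i *ᵥ u) (P i *ᵥ v) = -psInner n s u v := by
  rw [P_symmv hsym hi, P_sq_vec hrel hi, psInner_neg_right]

include hsym hrel in
lemma prod_isometry (L : List ℕ) (hL : ∀ i ∈ L, i ∈ Finset.Icc 1 m) (u v : Fin n → ℝ) :
    psInner n s ((L.map P).prod *ᵥ u) ((L.map P).prod *ᵥ v)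
      = ((-1:ℝ)^L.length) * psInner n s u v := by
  induction L generalizing u v with
  | nil => simp [one_mulVec]
  | cons a t ih =>
    have ha : a ∈ Finset.Icc 1 m := hL a ((by simp : a ∈ a :: t))
    have ht : ∀ i ∈ t, i ∈ Finset.Icc 1 m := fun i hi => hL i (List.mem_cons_of_mem a hi)
    simp only [List.map_cons, List.prod_cons, List.length_cons, ← mulVec_mulVec]
    rw [P_anti_iso hsym hrel ha, ih ht, pow_succ]
    ring

include hsym hrel in
lemma main_connect (hn : 0 < n) (hm : 2 ≤ m)
    (Q : Matrix (Fin n) (Fin n) ℝ)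
    (hQ2 : Q * Q = 1)
    (hQiso : ∀ u v, psInner n s (Q *ᵥ u) (Q *ᵥ v) = psInner n s u v)
    (hQanti : ∀ j ∈ Finset.Icc 1 m, Q * P j = -(P j * Q))
    (hpos : ∀ z, Q *ᵥ z = z → z ≠ 0 → 0 < psInner n s z z)
    (Mp : Set (Fin n → ℝ))
    (hMp : Mp = {x | psInner n s x x = 1 ∧
      ∀ j ∈ Finset.Icc 1 m, psInner n s (P j *ᵥ x) x = 0}) :
    (∀ z ∈ Mp, 1 ≤ psInner n s ((1/2:ℝ) • (z + Q *ᵥ z)) ((1/2:ℝ) • (z + Q *ᵥ z)))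
      ∧ IsConnected Mp := by
  have h1m : 1 ∈ Finset.Icc 1 m := Finset.mem_Icc.mpr ⟨le_refl 1, by omega⟩
  have h2m : 2 ∈ Finset.Icc 1 m := Finset.mem_Icc.mpr ⟨by omega, hm⟩
  have hQQ : ∀ v, Q *ᵥ (Q *ᵥ v) = v := fun v => by rw [mulVec_mulVec, hQ2, one_mulVec]
  have hanti_vec : ∀ j ∈ Finset.Icc 1 m, ∀ v, Q *ᵥ (P j *ᵥ v) = -(P j *ᵥ (Q *ᵥ v)) := by
    intro j hj v
    rw [mulVec_mulVec, hQanti j hj, neg_mulVec, ← mulVec_mulVec, mulVec_mulVec]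
  have horth : ∀ u v, Q *ᵥ u = u → Q *ᵥ v = -v → psInner n s u v = 0 := by
    intro u v hu hv
    have h := hQiso u v
    rw [hu, hv, psInner_neg_right] at h
    linarith
  have hswapm : ∀ j ∈ Finset.Icc 1 m, ∀ x, Q *ᵥ x = x → Q *ᵥ (P j *ᵥ x) = -(P j *ᵥ x) := by
    intro j hj x hx; rw [hanti_vec j hj, hx]
  have hswapp : ∀ j ∈ Finset.Icc 1 m, ∀ x, Q *ᵥ x = -x → Q *ᵥ (P j *ᵥ x) = P j *ᵥ x := by
    intro j hj x hx; rw [hanti_vec j hj, hx, mulVec_neg, neg_neg]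
  have hPj_ne : ∀ j ∈ Finset.Icc 1 m, ∀ x : Fin n → ℝ, x ≠ 0 → P j *ᵥ x ≠ 0 := by
    intro j hj x hx h0
    apply hx
    have h := P_sq_vec hrel hj x
    rw [h0, mulVec_zero] at h
    have := h.symm
    rwa [neg_eq_zero] at this
  have hneg : ∀ w, Q *ᵥ w = -w → psInner n s w w ≤ 0 := by
    intro w hw
    by_cases h0 : w = 0
    · rw [h0, psInner_zero_left]
    · have hw' : Q *ᵥ (P 1 *ᵥ w) = P 1 *ᵥ w := hswapp 1 h1m w hw
      have hne := hPj_ne 1 h1m w h0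
      have hp := hpos _ hw' hne
      rw [P_anti_iso hsym hrel h1m w w] at hp
      linarith
  set plus : (Fin n → ℝ) → (Fin n → ℝ) := fun z => (1/2:ℝ) • (z + Q *ᵥ z) with hplus
  set minus : (Fin n → ℝ) → (Fin n → ℝ) := fun z => (1/2:ℝ) • (z - Q *ᵥ z) with hminus
  have hsplit : ∀ z, plus z + minus z = z := by
    intro z; rw [hplus, hminus]; module
  have hfix : ∀ z, Q *ᵥ plus z = plus z := by
    intro z
    rw [hplus]
    simp only [mulVec_smul, mulVec_add, hQQ]
    rw [add_comm]
  have hflip : ∀ z, Q *ᵥ minus z = -(minus z) := by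
    intro z
    rw [hminus]
    simp only [mulVec_smul, mulVec_sub, hQQ]
    module
  have hBexp : ∀ (c d : ℝ) (u v : Fin n → ℝ),
      psInner n s (c • u + d • v) (c • u + d • v)
        = c*c*psInner n s u u + 2*(c*d)*psInner n s u v + d*d*psInner n s v v := by
    intro c d u v
    simp only [psInner_add_left, psInner_add_right, psInner_smul_left, psInner_smul_right]
    rw [psInner_symm n s v u]
    ring
  have hBPexp : ∀ j ∈ Finset.Icc 1 m, ∀ (c d : ℝ) (u v : Fin n → ℝ),
      psInner n s (P j *ᵥ (c • u + d • v)) (c • u + d • v)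
        = c*c*psInner n s (P j *ᵥ u) u + 2*(c*d)*psInner n s (P j *ᵥ u) v
          + d*d*psInner n s (P j *ᵥ v) v := by
    intro j hj c d u v
    rw [mulVec_add, mulVec_smul, mulVec_smul]
    simp only [psInner_add_left, psInner_add_right, psInner_smul_left, psInner_smul_right]
    have h1 : psInner n s (P j *ᵥ v) u = psInner n s (P j *ᵥ u) v := by
      rw [P_symmv hsym hj, psInner_symm]
    rw [h1]
    ring
  have hBp0 : ∀ j ∈ Finset.Icc 1 m, ∀ x, Q *ᵥ x = x → psInner n s (P j *ᵥ x) x = 0 := by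
    intro j hj x hx
    rw [psInner_symm]
    exact horth x (P j *ᵥ x) hx (hswapm j hj x hx)
  have hBm0 : ∀ j ∈ Finset.Icc 1 m, ∀ x, Q *ᵥ x = -x → psInner n s (P j *ᵥ x) x = 0 := by
    intro j hj x hx
    exact horth (P j *ᵥ x) x (hswapp j hj x hx) hx
  have hpm0 : ∀ z, psInner n s (plus z) (minus z) = 0 :=
    fun z => horth _ _ (hfix z) (hflip z)
  have hzero_cross : ∀ z ∈ Mp, ∀ j ∈ Finset.Icc 1 m,
      psInner n s (P j *ᵥ plus z) (minus z) = 0 := by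
    intro z hz j hj
    have hzmem := hz
    rw [hMp] at hzmem
    have hzc : psInner n s (P j *ᵥ z) z = 0 := hzmem.2 j hj
    have h := hBPexp j hj 1 1 (plus z) (minus z)
    simp only [one_smul] at h
    rw [hsplit z, hzc, hBp0 j hj (plus z) (hfix z), hBm0 j hj (minus z) (hflip z)] at h
    linarith
  have hdecomp : ∀ z, psInner n s z z
      = psInner n s (plus z) (plus z) + psInner n s (minus z) (minus z) := by
    intro z
    have h := hBexp 1 1 (plus z) (minus z)
    simp only [one_smul] at h
    rw [hsplit z, hpm0 z] at h
    linarith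
  have hpart1 : ∀ z ∈ Mp, 1 ≤ psInner n s (plus z) (plus z) := by
    intro z hz
    have hzmem := hz
    rw [hMp] at hzmem
    have h2 := hdecomp z
    have h3 := hneg (minus z) (hflip z)
    rw [hzmem.1] at h2
    linarith
  refine ⟨hpart1, ?_⟩
  set S : Set (Fin n → ℝ) := {x | Q *ᵥ x = x ∧ psInner n s x x = 1} with hS
  have hSsub : S ⊆ Mp := by
    intro x hx
    rw [hMp]
    exact ⟨hx.2, fun j hj => hBp0 j hj x hx.1⟩
  have hbase : ∃ x₀, x₀ ∈ S := by
    obtain ⟨w, hwfix, hwne⟩ : ∃ w, Q *ᵥ w = w ∧ w ≠ 0 := by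
      by_contra hcon
      push_neg at hcon
      have hallneg : ∀ v, Q *ᵥ v = -v := by
        intro v
        have h := hcon (plus v) (hfix v)
        rw [hplus] at h
        have h2 : v + Q *ᵥ v = 0 := by
          have := congrArg (fun x => (2:ℝ) • x) h
          simpa [smul_smul] using this
        have h3 : Q *ᵥ v + v = 0 := by rw [add_comm]; exact h2
        exact eq_neg_of_add_eq_zero_left h3
      have hP1 : ∀ v : Fin n → ℝ, P 1 *ᵥ v = 0 := by
        intro v
        have ha : Q *ᵥ (P 1 *ᵥ v) = P 1 *ᵥ v := hswapp 1 h1m v (hallneg v)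
        have hb : Q *ᵥ (P 1 *ᵥ v) = -(P 1 *ᵥ v) := hallneg (P 1 *ᵥ v)
        have hc : P 1 *ᵥ v = -(P 1 *ᵥ v) := ha.symm.trans hb
        have hd : (2:ℝ) • (P 1 *ᵥ v) = 0 := by
          rw [two_smul]
          nth_rewrite 1 [hc]
          module
        have := smul_eq_zero.mp hd
        rcases this with h | h
        · norm_num at h
        · exact h
      have hv0 : (fun _ : Fin n => (1:ℝ)) = 0 := by
        have h := P_sq_vec hrel h1m (fun _ : Fin n => (1:ℝ))
        rw [hP1] at h
        have := h.symm
        rwa [neg_eq_zero] at this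
      exact one_ne_zero (congrFun hv0 ⟨0, hn⟩)
    have hc := hpos w hwfix hwne
    refine ⟨(Real.sqrt (psInner n s w w))⁻¹ • w, ?_, ?_⟩
    · rw [mulVec_smul, hwfix]
    · rw [psInner_smul_left, psInner_smul_right, ← mul_assoc, ← mul_inv,
        Real.mul_self_sqrt (le_of_lt hc)]
      exact inv_mul_cancel₀ (ne_of_gt hc)
  -- joining two points of the sphere with nonnegative inner product
  have hjoinS : ∀ x ∈ S, ∀ w ∈ S, 0 ≤ psInner n s x w → JoinedIn S x w := by
    intro x hx w hw hc
    set c := psInner n s x w with hcdef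
    set g : ℝ → ℝ := fun t => (1-t)*(1-t) + 2*((1-t)*t)*c + t*t with hg
    have hgpos : ∀ t : ℝ, 0 ≤ t → t ≤ 1 → 0 < g t := by
      intro t h0 h1
      have hm1 : 0 ≤ (1-t)*t := mul_nonneg (by linarith) h0
      have hm2 : 0 ≤ 2*((1-t)*t)*c := by
        apply mul_nonneg _ hc
        linarith
      rw [hg]
      simp only
      nlinarith [sq_nonneg (1 - 2*t)]
    have hBvv : ∀ t : ℝ, psInner n s ((1-t) • x + t • w) ((1-t) • x + t • w) = g t := by
      intro t
      rw [hBexp, hx.2, hw.2, hg]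
      ring
    have hgcont : Continuous g := by
      rw [hg]; fun_prop
    refine ⟨⟨⟨fun t => (Real.sqrt (g t))⁻¹ • ((1-(t:ℝ)) • x + (t:ℝ) • w), ?_⟩, ?_, ?_⟩, ?_⟩
    · apply Continuous.smul (f := fun t : unitInterval => (Real.sqrt (g t))⁻¹)
        (g := fun t : unitInterval => ((1-(t:ℝ)) • x + (t:ℝ) • w))
      · apply Continuous.inv₀
        · exact Real.continuous_sqrt.comp (hgcont.comp continuous_subtype_val)
        · intro t
          exact ne_of_gt (Real.sqrt_pos.mpr (hgpos t t.2.1 t.2.2))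
      · exact ((continuous_const.sub continuous_subtype_val).smul continuous_const).add
          (continuous_subtype_val.smul continuous_const)
    · show (Real.sqrt (g 0))⁻¹ • ((1-(0:ℝ)) • x + (0:ℝ) • w) = x
      have : g 0 = 1 := by rw [hg]; norm_num
      rw [this, Real.sqrt_one, inv_one]
      simp
    · show (Real.sqrt (g 1))⁻¹ • ((1-(1:ℝ)) • x + (1:ℝ) • w) = w
      have : g 1 = 1 := by rw [hg]; norm_num
      rw [this, Real.sqrt_one, inv_one]
      simp
    · intro t
      simp only [Path.coe_mk_mk, ContinuousMap.coe_mk]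
      have ht0 := t.2.1
      have ht1 := t.2.2
      have hgt := hgpos t ht0 ht1
      constructor
      · simp only [mulVec_smul, mulVec_add, hx.1, hw.1]
      · rw [psInner_smul_left, psInner_smul_right, hBvv]
        rw [← mul_assoc, ← mul_inv, Real.mul_self_sqrt (le_of_lt hgt)]
        exact inv_mul_cancel₀ (ne_of_gt hgt)
  -- any two points of the sphere are joined
  have hjoinS2 : ∀ x ∈ S, ∀ w ∈ S, JoinedIn S x w := by
    intro x hx w hw
    set y := P 1 *ᵥ (P 2 *ᵥ x) with hy
    have hyfix : Q *ᵥ y = y := hswapp 1 h1m _ (hswapm 2 h2m x hx.1)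
    have hynorm : psInner n s y y = 1 := by
      rw [hy, P_anti_iso hsym hrel h1m, P_anti_iso hsym hrel h2m, hx.2]
      norm_num
    have hyS : y ∈ S := ⟨hyfix, hynorm⟩
    have hxy : psInner n s x y = 0 := by
      have h0 : P 1 * P 2 + P 2 * P 1 = 0 := by
        rw [hrel 1 h1m 2 h2m, cliffEta]
        norm_num
      have key : psInner n s ((P 1 * P 2 + P 2 * P 1) *ᵥ x) x = 0 := by
        rw [h0, zero_mulVec, psInner_zero_left]
      rw [add_mulVec, psInner_add_left, ← mulVec_mulVec, ← mulVec_mulVec] at key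
      have ea : psInner n s (P 1 *ᵥ (P 2 *ᵥ x)) x = psInner n s (P 2 *ᵥ x) (P 1 *ᵥ x) :=
        P_symmv hsym h1m _ _
      have eb : psInner n s (P 2 *ᵥ (P 1 *ᵥ x)) x = psInner n s (P 1 *ᵥ x) (P 2 *ᵥ x) :=
        P_symmv hsym h2m _ _
      have ec : psInner n s (P 2 *ᵥ x) (P 1 *ᵥ x) = psInner n s (P 1 *ᵥ x) (P 2 *ᵥ x) :=
        psInner_symm n s _ _
      have hd : psInner n s x y = psInner n s (P 1 *ᵥ x) (P 2 *ᵥ x) :=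
        (P_symmv hsym h1m x (P 2 *ᵥ x)).symm
      rw [hd]
      rw [ea, eb, ec] at key
      linarith
    by_cases hcy : 0 ≤ psInner n s y w
    · exact (hjoinS x hx y hyS (le_of_eq hxy.symm)).trans (hjoinS y hyS w hw hcy)
    · have hyS' : -y ∈ S := by
        constructor
        · rw [mulVec_neg, hyfix]
        · rw [psInner_neg_left, psInner_neg_right, hynorm]; norm_num
      have hj1 : 0 ≤ psInner n s x (-y) := by
        rw [psInner_neg_right, hxy]; norm_num
      have hj2 : 0 ≤ psInner n s (-y) w := by
        rw [psInner_neg_left]; linarith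
      exact (hjoinS x hx (-y) hyS' hj1).trans (hjoinS (-y) hyS' w hw hj2)
  -- joining any point of Mp to the sphere
  have hjoinMp : ∀ z ∈ Mp, ∃ x₁ ∈ S, JoinedIn Mp z x₁ := by
    intro z hz
    have hzmem := hz
    rw [hMp] at hzmem
    set u := plus z with hu
    set v := minus z with hv
    set a := psInner n s u u with ha
    have ha1 : 1 ≤ a := hpart1 z hz
    have ha0 : 0 < a := by linarith
    set b := psInner n s v v with hb
    have hab : a + b = 1 := by
      have h := hdecomp z
      rw [hzmem.1] at h
      linarith
    have hb0 : b ≤ 0 := hneg v (hflip z)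
    set f : ℝ → ℝ := fun t => Real.sqrt ((1 - (1-t)*(1-t)*b)/a) with hf
    have hfarg : ∀ t : ℝ, 0 < 1 - (1-t)*(1-t)*b := by
      intro t
      nlinarith [mul_self_nonneg (1-t)]
    have hfsq : ∀ t : ℝ, f t * f t = (1 - (1-t)*(1-t)*b)/a := fun t =>
      Real.mul_self_sqrt (le_of_lt (div_pos (hfarg t) ha0))
    have hfcont : Continuous f := by
      rw [hf]
      apply Real.continuous_sqrt.comp
      fun_prop
    have hmem : ∀ t : ℝ, f t • u + (1-t) • v ∈ Mp := by
      intro t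
      rw [hMp]
      constructor
      · rw [hBexp, hpm0 z, hfsq, ← ha, ← hb]
        field_simp
        ring
      · intro j hj
        rw [hBPexp j hj, hBp0 j hj u (hfix z), hBm0 j hj v (hflip z),
          hzero_cross z hz j hj]
        ring
    refine ⟨f 1 • u, ⟨?_, ?_⟩, ?_⟩
    · rw [mulVec_smul, hfix]
    · rw [psInner_smul_left, psInner_smul_right, ← ha, ← mul_assoc, hfsq]
      field_simp
      ring
    · refine ⟨⟨⟨fun t => f (t:ℝ) • u + (1-(t:ℝ)) • v, ?_⟩, ?_, ?_⟩, ?_⟩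
      · exact ((hfcont.comp continuous_subtype_val).smul continuous_const).add
          ((continuous_const.sub continuous_subtype_val).smul continuous_const)
      · show f (0:ℝ) • u + (1-(0:ℝ)) • v = z
        have h0 : f 0 = 1 := by
          show Real.sqrt ((1 - (1-(0:ℝ))*(1-(0:ℝ))*b)/a) = 1
          have e : (1 - (1-(0:ℝ))*(1-(0:ℝ))*b) = a := by norm_num; linarith
          rw [e, div_self (ne_of_gt ha0), Real.sqrt_one]
        rw [h0]
        simp only [one_smul, sub_zero]
        exact hsplit z
      · show f (1:ℝ) • u + (1-(1:ℝ)) • v = f 1 • u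
        simp
      · intro t
        simp only [Path.coe_mk_mk, ContinuousMap.coe_mk]
        exact hmem (t:ℝ)
  obtain ⟨x₀, hx₀⟩ := hbase
  have hpc : IsPathConnected Mp := by
    refine ⟨x₀, hSsub hx₀, ?_⟩
    intro z hz
    obtain ⟨x₁, hx₁S, hjz⟩ := hjoinMp z hz
    exact ((hjoinS2 x₀ hx₀ x₁ hx₁S).mono hSsub).trans hjz.symm
  exact hpc.isConnected

end

end CliffAux

/-- with `m ≡ 0 (mod 4)`, `r = m`, `s = l ≤ 2l - 1`, `P = P_1 ⋯ P_m`: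
if `⟨·,·⟩` is positive definite on `E₊(P)` (case (c-1), `(s₁,s₂) = (0,l)`), then
`M₊ = M₊,₁` and `M₊` is connected; if `⟨·,·⟩` is negative definite on `E₊(P)`
(case (c-2), `(s₁,s₂) = (l,0)`), then `M₊ = M₊,₂` and `M₊` is connected. -/
theorem Mplus_connected_definite_cases (l s m r : ℕ) (hl : 0 < l) (hs : s ≤ 2 * l - 1)
    (hm : 2 ≤ m) (hm4 : m % 4 = 0) (hrm : r = m) (hsl : s = l)
    (P : ℕ → Matrix (Fin (2 * l)) (Fin (2 * l)) ℝ)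
    (hP : IsCliffordSystem l s m r P)
    (Pm : Matrix (Fin (2 * l)) (Fin (2 * l)) ℝ)
    (hPm : Pm = ((List.range m).map fun k => P (1 + k)).prod)
    (Mp : Set (Fin (2 * l) → ℝ))
    (hMp : Mp = {x | psInner (2 * l) s x x = 1 ∧
      ∀ j ∈ Finset.Icc 1 m, psInner (2 * l) s (P j *ᵥ x) x = 0})
    (zpl : (Fin (2 * l) → ℝ) → (Fin (2 * l) → ℝ))
    (hzpl : zpl = fun z => (1 / 2 : ℝ) • (z + Pm *ᵥ z))
    (M1 M2 : Set (Fin (2 * l) → ℝ))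
    (hM1 : M1 = {z ∈ Mp | 1 ≤ psInner (2 * l) s (zpl z) (zpl z)})
    (hM2 : M2 = {z ∈ Mp | psInner (2 * l) s (zpl z) (zpl z) ≤ 0}) :
    ((∀ z : Fin (2 * l) → ℝ, Pm *ᵥ z = z → z ≠ 0 → 0 < psInner (2 * l) s z z) →
      Mp = M1 ∧ IsConnected Mp) ∧
    ((∀ z : Fin (2 * l) → ℝ, Pm *ᵥ z = z → z ≠ 0 → psInner (2 * l) s z z < 0) →
      Mp = M2 ∧ IsConnected Mp) := by

  rw [hrm] at hP
  obtain ⟨hsym, hrel⟩ := hP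
  have h1m : 1 ∈ Finset.Icc 1 m := Finset.mem_Icc.mpr ⟨le_refl 1, by omega⟩
  set L₀ : List ℕ := (List.range m).map (fun k => 1 + k) with hL₀
  have hmemL : ∀ i ∈ L₀, i ∈ Finset.Icc 1 m := by
    intro i hi
    simp only [hL₀, List.mem_map, List.mem_range] at hi
    obtain ⟨k, hk, rfl⟩ := hi
    exact Finset.mem_Icc.mpr ⟨by omega, by omega⟩
  have hndL : L₀.Nodup := List.Nodup.map (fun a b hab => by omega) (by exact List.nodup_range : (List.range m).Nodup)
  have hlenL : L₀.length = m := by simp [hL₀]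
  have hmemL' : ∀ j ∈ Finset.Icc 1 m, j ∈ L₀ := by
    intro j hj
    rw [Finset.mem_Icc] at hj
    simp only [hL₀, List.mem_map, List.mem_range]
    exact ⟨j - 1, by omega, by omega⟩
  have hPmL : Pm = (L₀.map P).prod := by
    rw [hPm, hL₀, List.map_map]
    rfl
  have hPm2 : Pm * Pm = 1 := by
    rw [hPmL, CliffAux.prod_sq hrel hmemL hndL, hlenL, CliffAux.eps_of_mod_four m hm4,
      one_smul]
  have hPmiso : ∀ u v, psInner (2*l) s (Pm *ᵥ u) (Pm *ᵥ v) = psInner (2*l) s u v := by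
    intro u v
    rw [hPmL, CliffAux.prod_isometry hsym hrel L₀ hmemL, hlenL,
      Even.neg_one_pow ⟨m/2, by omega⟩, one_mul]
  have hPmanti : ∀ j ∈ Finset.Icc 1 m, Pm * P j = -(P j * Pm) := by
    intro j hj
    rw [hPmL, CliffAux.prod_mul_P_mem hrel hmemL hndL (hmemL' j hj), hlenL,
      Odd.neg_one_pow ⟨m/2, by omega⟩, neg_one_smul]
  constructor
  · intro hc1
    have hmain := CliffAux.main_connect hsym hrel (by omega : 0 < 2*l) hm Pm hPm2 hPmiso
      hPmanti hc1 Mp hMp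
    refine ⟨?_, hmain.2⟩
    rw [hM1]
    ext z
    simp only [Set.mem_sep_iff]
    constructor
    · intro hz
      refine ⟨hz, ?_⟩
      have h := hmain.1 z hz
      simp only [hzpl]
      exact h
    · exact fun h => h.1
  · intro hc2
    have hQ2 : (-Pm) * (-Pm) = 1 := by rw [neg_mul_neg, hPm2]
    have hQiso : ∀ u v, psInner (2*l) s ((-Pm) *ᵥ u) ((-Pm) *ᵥ v)
        = psInner (2*l) s u v := by
      intro u v
      rw [neg_mulVec, neg_mulVec, CliffAux.psInner_neg_left, CliffAux.psInner_neg_right,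
        neg_neg, hPmiso]
    have hQanti : ∀ j ∈ Finset.Icc 1 m, (-Pm) * P j = -(P j * (-Pm)) := by
      intro j hj
      rw [neg_mul, hPmanti j hj, mul_neg, neg_neg]
    have hQpos : ∀ z : Fin (2*l) → ℝ, (-Pm) *ᵥ z = z → z ≠ 0 →
        0 < psInner (2*l) s z z := by
      intro z hz hz0
      have hz' : Pm *ᵥ z = -z := by
        rw [neg_mulVec] at hz
        exact neg_eq_iff_eq_neg.mp hz
      have hwfix : Pm *ᵥ (P 1 *ᵥ z) = P 1 *ᵥ z := by
        rw [mulVec_mulVec, hPmanti 1 h1m, neg_mulVec, ← mulVec_mulVec, hz', mulVec_neg,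
          neg_neg]
      have hwne : P 1 *ᵥ z ≠ 0 := by
        intro h0
        apply hz0
        have h := CliffAux.P_sq_vec hrel h1m z
        rw [h0, mulVec_zero] at h
        have := h.symm
        rwa [neg_eq_zero] at this
      have hlt := hc2 (P 1 *ᵥ z) hwfix hwne
      rw [CliffAux.P_anti_iso hsym hrel h1m z z] at hlt
      linarith
    have hmain := CliffAux.main_connect hsym hrel (by omega : 0 < 2*l) hm (-Pm) hQ2 hQiso
      hQanti hQpos Mp hMp
    have hdec : ∀ z : Fin (2*l) → ℝ, psInner (2*l) s z z
        = psInner (2*l) s (zpl z) (zpl z)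
          + psInner (2*l) s ((1/2:ℝ) • (z + (-Pm) *ᵥ z)) ((1/2:ℝ) • (z + (-Pm) *ᵥ z)) := by
      intro z
      have hzpzm : zpl z + (1/2:ℝ) • (z + (-Pm) *ᵥ z) = z := by
        simp only [hzpl]
        rw [neg_mulVec]
        module
      have hfixp : Pm *ᵥ zpl z = zpl z := by
        simp only [hzpl]
        simp only [mulVec_smul, mulVec_add, mulVec_mulVec, hPm2, one_mulVec]
        rw [add_comm]
      have hflipm : Pm *ᵥ ((1/2:ℝ) • (z + (-Pm) *ᵥ z))
          = -((1/2:ℝ) • (z + (-Pm) *ᵥ z)) := by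
        rw [neg_mulVec]
        simp only [mulVec_smul, mulVec_add, mulVec_neg, mulVec_mulVec, hPm2, one_mulVec]
        module
      have hcross : psInner (2*l) s (zpl z) ((1/2:ℝ) • (z + (-Pm) *ᵥ z)) = 0 := by
        have h := hPmiso (zpl z) ((1/2:ℝ) • (z + (-Pm) *ᵥ z))
        rw [hfixp, hflipm, CliffAux.psInner_neg_right] at h
        linarith
      have hcross' : psInner (2*l) s ((1/2:ℝ) • (z + (-Pm) *ᵥ z)) (zpl z) = 0 := by
        rw [CliffAux.psInner_symm]
        exact hcross
      conv_lhs => rw [← hzpzm]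
      rw [CliffAux.psInner_add_left, CliffAux.psInner_add_right, CliffAux.psInner_add_right,
        hcross, hcross']
      ring
    refine ⟨?_, hmain.2⟩
    rw [hM2]
    ext z
    simp only [Set.mem_sep_iff]
    constructor
    · intro hz
      refine ⟨hz, ?_⟩
      have h1 := hmain.1 z hz
      have h2 := hdec z
      have hz1 : psInner (2*l) s z z = 1 := by
        rw [hMp] at hz
        exact hz.1
      linarith
    · exact fun h => h.1
end
end

section
/- Let P_1, …, P_m be a Clifford system of signature (m, r) on ℝ^{2l}_s with m ≡ 0 (mod 4), r ≡ 0 (mod 2), s ≤ 2l − 1, and l > m, set P := P_1P_2⋯P_m, and let L be a connected component of M_+ (M_+ is non-empty). Then there exist x ∈ E_+(P) \ {0} and y ∈ E_−(P) \ {0} such that x + y ∈ L. -/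
open Matrix

noncomputable section

lemma psJ_mul_psJ (n s : ℕ) : psJ n s * psJ n s = 1 := by
  rw [psJ, Matrix.diagonal_mul_diagonal]
  ext i j
  by_cases h : (i:ℕ) < s <;> simp [h, Matrix.diagonal, Matrix.one_apply]

lemma psJ_transpose (n s : ℕ) : (psJ n s)ᵀ = psJ n s := by
  simp [psJ]

lemma dot_mulVec_left {n : ℕ} (B : Matrix (Fin n) (Fin n) ℝ) (u w : Fin n → ℝ) :
    (B *ᵥ u) ⬝ᵥ w = u ⬝ᵥ (Bᵀ *ᵥ w) := by
  conv_rhs => rw [Matrix.dotProduct_mulVec, ← Matrix.mulVec_transpose, Matrix.transpose_transpose]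

lemma psInner_adj (n s : ℕ) (A : Matrix (Fin n) (Fin n) ℝ)
    (hA : Aᵀ = psJ n s * A * psJ n s) (u v : Fin n → ℝ) :
    psInner n s (A *ᵥ u) v = psInner n s u (A *ᵥ v) := by
  rw [psInner, psInner, dot_mulVec_left, Matrix.mulVec_mulVec, Matrix.mulVec_mulVec, hA]
  rw [Matrix.mul_assoc, Matrix.mul_assoc, psJ_mul_psJ, Matrix.mul_one]

lemma psInner_comm (n s : ℕ) (u v : Fin n → ℝ) : psInner n s u v = psInner n s v u := by
  rw [psInner, psInner, dotProduct_comm u, dot_mulVec_left (psJ n s) v u, psJ_transpose]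

lemma psInner_add_left (n s : ℕ) (u v w : Fin n → ℝ) :
    psInner n s (u + v) w = psInner n s u w + psInner n s v w := by
  simp [psInner, add_dotProduct]

lemma psInner_add_right (n s : ℕ) (u v w : Fin n → ℝ) :
    psInner n s u (v + w) = psInner n s u v + psInner n s u w := by
  simp [psInner, Matrix.mulVec_add, dotProduct_add]

lemma psInner_smul_left (n s : ℕ) (c : ℝ) (u w : Fin n → ℝ) :
    psInner n s (c • u) w = c * psInner n s u w := by
  simp [psInner, smul_dotProduct]

lemma psInner_smul_right (n s : ℕ) (c : ℝ) (u w : Fin n → ℝ) :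
    psInner n s u (c • w) = c * psInner n s u w := by
  simp [psInner, Matrix.mulVec_smul, dotProduct_smul]

lemma psInner_neg_right (n s : ℕ) (u w : Fin n → ℝ) :
    psInner n s u (-w) = - psInner n s u w := by
  simp [psInner, Matrix.mulVec_neg, dotProduct_neg]

def Qprod {N : ℕ} (P : ℕ → Matrix (Fin N) (Fin N) ℝ) (k : ℕ) :
    Matrix (Fin N) (Fin N) ℝ :=
  ((List.range k).map fun j => P (1 + j)).prod

lemma Qprod_succ {N : ℕ} (P : ℕ → Matrix (Fin N) (Fin N) ℝ) (k : ℕ) :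
    Qprod P (k + 1) = Qprod P k * P (1 + k) := by
  simp [Qprod, List.range_succ]

lemma tri_succ (k : ℕ) : (k+1)*k/2 = k*(k-1)/2 + k := by
  cases k with
  | zero => simp
  | succ j =>
    have h1 : (j+1+1)*(j+1) = (j+1)*j + 2*(j+1) := by ring
    have h2 : (j+1)*(j+1-1) = (j+1)*j := by simp
    rw [h1, h2, Nat.add_mul_div_left _ _ (by norm_num : 0 < 2)]

lemma sign_tri (k : ℕ) : (-1:ℝ)^((k+1)*k/2) = (-1)^(k*(k-1)/2) * (-1)^k := by
  rw [tri_succ, pow_add]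

section CliffAlg
variable {N m r : ℕ} {P : ℕ → Matrix (Fin N) (Fin N) ℝ}
  (hrel : ∀ i ∈ Finset.Icc 1 m, ∀ j ∈ Finset.Icc 1 m,
    P i * P j + P j * P i = (2 * cliffEta r i j) • (1 : Matrix (Fin N) (Fin N) ℝ))

include hrel

lemma cliff_sq {i : ℕ} (hi : i ∈ Finset.Icc 1 m) :
    P i * P i = ((if i ≤ r then (-1:ℝ) else 1)) • 1 := by
  have h := hrel i hi i hi
  rw [cliffEta, if_pos rfl] at h
  have h2 : (2:ℝ) • (P i * P i) = (2 * if i ≤ r then (-1:ℝ) else 1) • 1 := by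
    rw [two_smul]; exact h
  have := congrArg (fun M => (2:ℝ)⁻¹ • M) h2
  simpa [smul_smul] using this

lemma cliff_anti {i j : ℕ} (hi : i ∈ Finset.Icc 1 m) (hj : j ∈ Finset.Icc 1 m)
    (hij : i ≠ j) : P i * P j = -(P j * P i) := by
  have h := hrel i hi j hj
  rw [cliffEta, if_neg hij] at h
  simp only [mul_zero, zero_smul] at h
  exact eq_neg_of_add_eq_zero_left h

lemma q_comm {a k : ℕ} (ha : a ∈ Finset.Icc 1 m) (hk : k ≤ m) :
    Qprod P k * P a = ((if a ≤ k then (-1:ℝ) else 1) * (-1)^k) • (P a * Qprod P k) := by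
  induction k with
  | zero =>
    have ha1 : 1 ≤ a := (Finset.mem_Icc.mp ha).1
    have : ¬ (a ≤ 0) := by omega
    simp [Qprod, this]
  | succ k ih =>
    have hk' : k ≤ m := by omega
    have hk1 : 1 + k ∈ Finset.Icc 1 m := by rw [Finset.mem_Icc]; omega
    have ihk := ih hk'
    have h2k : (-1:ℝ)^k * (-1)^k = 1 := by rw [← mul_pow]; norm_num
    by_cases hak : a = 1 + k
    · subst hak
      have hle : ¬ (1 + k ≤ k) := by omega
      have ihk' := ih hk'
      rw [if_neg hle, one_mul] at ihk'
      have ih'' : P (1 + k) * Qprod P k = ((-1:ℝ)^k) • (Qprod P k * P (1 + k)) := by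
        rw [ihk', smul_smul, h2k, one_smul]
      have hsq1 := cliff_sq hrel ha
      have hL : Qprod P (k+1) * P (1+k) = (if 1 + k ≤ r then (-1:ℝ) else 1) • Qprod P k := by
        rw [Qprod_succ, Matrix.mul_assoc, hsq1, mul_smul_comm, Matrix.mul_one]
      have hR : P (1+k) * Qprod P (k+1)
          = ((-1:ℝ)^k * (if 1 + k ≤ r then (-1:ℝ) else 1)) • Qprod P k := by
        rw [Qprod_succ, ← Matrix.mul_assoc, ih'', Matrix.smul_mul, Matrix.mul_assoc, hsq1,
          mul_smul_comm, Matrix.mul_one, smul_smul]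
      rw [hL, hR, smul_smul]
      congr 1
      have hle2 : (1 + k) ≤ k + 1 := by omega
      rw [if_pos hle2, pow_succ]
      by_cases hh : 1 + k ≤ r <;> simp [hh] <;> linear_combination (-1:ℝ) * h2k
    · have hanti : P (1 + k) * P a = -(P a * P (1 + k)) := cliff_anti hrel hk1 ha (by omega)
      have hL : Qprod P (k+1) * P a
          = (-((if a ≤ k then (-1:ℝ) else 1) * (-1)^k)) • (P a * Qprod P (k+1)) := by
        rw [Qprod_succ, Matrix.mul_assoc, hanti, Matrix.mul_neg, ← Matrix.mul_assoc, ihk,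
          Matrix.smul_mul, Matrix.mul_assoc, ← Qprod_succ, neg_smul]
      rw [hL]
      congr 1
      by_cases h : a ≤ k
      · rw [if_pos h, if_pos (by omega : a ≤ k + 1), pow_succ]; ring
      · rw [if_neg h, if_neg (by omega : ¬ (a ≤ k + 1)), pow_succ]; ring

lemma q_self {k : ℕ} (hk : k ≤ m) :
    Qprod P k * Qprod P k = ((-1:ℝ)^(k*(k-1)/2) * (-1)^(min k r)) • 1 := by
  induction k with
  | zero => simp [Qprod]
  | succ k ih =>
    have hk' : k ≤ m := by omega
    have hk1 : 1 + k ∈ Finset.Icc 1 m := by rw [Finset.mem_Icc]; omega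
    have h2k : (-1:ℝ)^k * (-1)^k = 1 := by rw [← mul_pow]; norm_num
    have hcomm := q_comm hrel hk1 hk'
    rw [if_neg (by omega : ¬ (1 + k ≤ k)), one_mul] at hcomm
    have ih'' : P (1 + k) * Qprod P k = ((-1:ℝ)^k) • (Qprod P k * P (1 + k)) := by
      rw [hcomm, smul_smul, h2k, one_smul]
    have hsq1 := cliff_sq hrel hk1
    have ihk := ih hk'
    rw [Qprod_succ]
    calc Qprod P k * P (1+k) * (Qprod P k * P (1+k))
        = Qprod P k * (P (1+k) * Qprod P k) * P (1+k) := by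
          rw [Matrix.mul_assoc, Matrix.mul_assoc, Matrix.mul_assoc]
      _ = ((-1:ℝ)^k) • (Qprod P k * Qprod P k * (P (1+k) * P (1+k))) := by
          rw [ih'', mul_smul_comm, Matrix.smul_mul, Matrix.mul_assoc, Matrix.mul_assoc,
            Matrix.mul_assoc]
      _ = ((-1:ℝ)^((k+1)*(k+1-1)/2) * (-1)^(min (k+1) r)) • 1 := by
          rw [ihk, hsq1, Matrix.smul_mul, mul_smul_comm, Matrix.one_mul, smul_smul, smul_smul]
          congr 1
          rw [(by omega : k+1-1 = k), sign_tri]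
          by_cases hh : 1 + k ≤ r
          · rw [if_pos hh, (by omega : min (k+1) r = k+1), (by omega : min k r = k), pow_succ]
            ring
          · rw [if_neg hh, (by omega : min (k+1) r = min k r)]
            ring

lemma q_transpose {ss : ℕ}
    (hsym : ∀ i ∈ Finset.Icc 1 m, (P i)ᵀ = psJ N ss * P i * psJ N ss)
    {k : ℕ} (hk : k ≤ m) :
    (Qprod P k)ᵀ = ((-1:ℝ)^(k*(k-1)/2)) • (psJ N ss * Qprod P k * psJ N ss) := by
  induction k with
  | zero => simp [Qprod, psJ_mul_psJ]
  | succ k ih =>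
    have hk' : k ≤ m := by omega
    have hk1 : 1 + k ∈ Finset.Icc 1 m := by rw [Finset.mem_Icc]; omega
    have h2k : (-1:ℝ)^k * (-1)^k = 1 := by rw [← mul_pow]; norm_num
    have hcomm := q_comm hrel hk1 hk'
    rw [if_neg (by omega : ¬ (1 + k ≤ k)), one_mul] at hcomm
    have hcomm' : P (1 + k) * Qprod P k = ((-1:ℝ)^k) • (Qprod P k * P (1 + k)) := by
      rw [hcomm, smul_smul, h2k, one_smul]
    have ihk := ih hk'
    conv_lhs => rw [Qprod_succ]
    rw [Matrix.transpose_mul, hsym _ hk1, ihk, mul_smul_comm]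
    calc ((-1:ℝ)^(k*(k-1)/2)) • (psJ N ss * P (1+k) * psJ N ss * (psJ N ss * Qprod P k * psJ N ss))
        = ((-1:ℝ)^(k*(k-1)/2)) • (psJ N ss * (P (1+k) * Qprod P k) * psJ N ss) := by
          congr 1
          simp only [Matrix.mul_assoc]
          rw [← Matrix.mul_assoc (psJ N ss) (psJ N ss), psJ_mul_psJ, Matrix.one_mul]
      _ = ((-1:ℝ)^((k+1)*(k+1-1)/2)) • (psJ N ss * Qprod P (k+1) * psJ N ss) := by
          rw [hcomm', mul_smul_comm, Matrix.smul_mul, smul_smul]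
          simp only [Qprod_succ, Matrix.mul_assoc]
          congr 1
          rw [(by omega : k+1-1 = k), sign_tri]

end CliffAlg

lemma eigen_rank {n : ℕ} (A B : Matrix (Fin n) (Fin n) ℝ)
    (hA2 : A * A = 1) (η : ℝ) (hη : η = 1 ∨ η = -1) (hB : B * B = η • 1)
    (hAB : A * B = -(B * A)) :
    Module.finrank ℝ (LinearMap.ker (Matrix.mulVecLin (A - 1)))
      = Module.finrank ℝ (LinearMap.ker (Matrix.mulVecLin (A + 1))) ∧
    Module.finrank ℝ (LinearMap.ker (Matrix.mulVecLin (A - 1)))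
      + Module.finrank ℝ (LinearMap.ker (Matrix.mulVecLin (A + 1))) = n := by
  set Kp := LinearMap.ker (Matrix.mulVecLin (A - 1)) with hKp
  set Km := LinearMap.ker (Matrix.mulVecLin (A + 1)) with hKm
  have memp : ∀ w : Fin n → ℝ, w ∈ Kp ↔ A *ᵥ w = w := by
    intro w
    rw [hKp, LinearMap.mem_ker, Matrix.mulVecLin_apply, Matrix.sub_mulVec, Matrix.one_mulVec,
      sub_eq_zero]
  have memm : ∀ w : Fin n → ℝ, w ∈ Km ↔ A *ᵥ w = -w := by
    intro w
    rw [hKm, LinearMap.mem_ker, Matrix.mulVecLin_apply, Matrix.add_mulVec, Matrix.one_mulVec,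
      add_eq_zero_iff_eq_neg]
  have hBB : B * (η • B) = 1 := by
    rw [Matrix.mul_smul, hB, smul_smul]
    rcases hη with h | h <;> rw [h] <;> norm_num
  have hBB' : (η • B) * B = 1 := by
    rw [Matrix.smul_mul, hB, smul_smul]
    rcases hη with h | h <;> rw [h] <;> norm_num
  let e : (Fin n → ℝ) ≃ₗ[ℝ] (Fin n → ℝ) :=
    LinearEquiv.ofLinear (Matrix.mulVecLin B) (Matrix.mulVecLin (η • B))
      (by rw [← Matrix.mulVecLin_mul, hBB, Matrix.mulVecLin_one])
      (by rw [← Matrix.mulVecLin_mul, hBB', Matrix.mulVecLin_one])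
  have hmapmem : ∀ w : Fin n → ℝ, A *ᵥ w = w → A *ᵥ (B *ᵥ w) = -(B *ᵥ w) := by
    intro w hw
    rw [Matrix.mulVec_mulVec, hAB, Matrix.neg_mulVec, ← Matrix.mulVec_mulVec, hw]
  have hmapmem' : ∀ w : Fin n → ℝ, A *ᵥ w = -w → A *ᵥ (B *ᵥ w) = B *ᵥ w := by
    intro w hw
    rw [Matrix.mulVec_mulVec, hAB, Matrix.neg_mulVec, ← Matrix.mulVec_mulVec, hw,
      Matrix.mulVec_neg, neg_neg]
  have hle1 : Submodule.map (e : (Fin n → ℝ) →ₗ[ℝ] (Fin n → ℝ)) Kp ≤ Km := by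
    rintro x ⟨w, hw, rfl⟩
    rw [memm]
    exact hmapmem w ((memp w).mp hw)
  have hle2 : Submodule.map (e : (Fin n → ℝ) →ₗ[ℝ] (Fin n → ℝ)) Km ≤ Kp := by
    rintro x ⟨w, hw, rfl⟩
    rw [memp]
    exact hmapmem' w ((memm w).mp hw)
  have heq1 : Module.finrank ℝ Kp ≤ Module.finrank ℝ Km := by
    calc Module.finrank ℝ Kp
        = Module.finrank ℝ (Submodule.map (e : (Fin n → ℝ) →ₗ[ℝ] (Fin n → ℝ)) Kp) :=
          (LinearEquiv.finrank_map_eq e Kp).symm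
      _ ≤ Module.finrank ℝ Km := Submodule.finrank_mono hle1
  have heq2 : Module.finrank ℝ Km ≤ Module.finrank ℝ Kp := by
    calc Module.finrank ℝ Km
        = Module.finrank ℝ (Submodule.map (e : (Fin n → ℝ) →ₗ[ℝ] (Fin n → ℝ)) Km) :=
          (LinearEquiv.finrank_map_eq e Km).symm
      _ ≤ Module.finrank ℝ Kp := Submodule.finrank_mono hle2
  have heq : Module.finrank ℝ Kp = Module.finrank ℝ Km := le_antisymm heq1 heq2
  have hinf : Kp ⊓ Km = ⊥ := by
    rw [Submodule.eq_bot_iff]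
    rintro x ⟨h1, h2⟩
    have e1 := (memp x).mp h1
    have e2 := (memm x).mp h2
    have : x = -x := by rw [← e2, e1]
    have h2x : (2:ℝ) • x = 0 := by
      rw [two_smul]
      nth_rewrite 2 [this]
      simp
    have := congrArg (fun y => (2:ℝ)⁻¹ • y) h2x
    simpa [smul_smul] using this
  have hsup : Kp ⊔ Km = ⊤ := by
    rw [Submodule.eq_top_iff']
    intro x
    refine Submodule.mem_sup.mpr ⟨(2:ℝ)⁻¹ • (x + A *ᵥ x), ?_, (2:ℝ)⁻¹ • (x - A *ᵥ x), ?_, ?_⟩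
    · rw [memp, Matrix.mulVec_smul, Matrix.mulVec_add, Matrix.mulVec_mulVec, hA2,
        Matrix.one_mulVec, add_comm]
    · rw [memm, Matrix.mulVec_smul, Matrix.mulVec_sub, Matrix.mulVec_mulVec, hA2,
        Matrix.one_mulVec, ← smul_neg, neg_sub]
    · rw [← smul_add]
      rw [show x + A *ᵥ x + (x - A *ᵥ x) = (2:ℝ) • x by rw [two_smul]; abel]
      rw [smul_smul]; norm_num
  have hsum := Submodule.finrank_sup_add_finrank_inf_eq Kp Km
  rw [hinf, hsup] at hsum
  simp only [finrank_top, finrank_bot, add_zero] at hsum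
  refine ⟨heq, ?_⟩
  rw [← hsum]
  simp [Module.finrank_pi]

def psInnerL (n s : ℕ) (u : Fin n → ℝ) : (Fin n → ℝ) →ₗ[ℝ] ℝ where
  toFun w := psInner n s u w
  map_add' a b := by simp [psInner, Matrix.mulVec_add, dotProduct_add]
  map_smul' c a := by simp [psInner, Matrix.mulVec_smul, dotProduct_smul]

lemma exists_good_w {n m : ℕ} (K : Submodule ℝ (Fin n → ℝ)) (s : ℕ)
    (hrank : m < Module.finrank ℝ K) (φ : ℕ → (Fin n → ℝ)) :
    ∃ w : Fin n → ℝ, w ∈ K ∧ w ≠ 0 ∧ ∀ j ∈ Finset.Icc 1 m, psInner n s (φ j) w = 0 := by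
  let Φ : K →ₗ[ℝ] (Fin m → ℝ) :=
    LinearMap.pi fun a : Fin m => (psInnerL n s (φ (a.1 + 1))).comp K.subtype
  have hrn := LinearMap.finrank_range_add_finrank_ker Φ
  have hrange : Module.finrank ℝ (LinearMap.range Φ) ≤ m := by
    simpa using Submodule.finrank_le (LinearMap.range Φ)
  have hker : 0 < Module.finrank ℝ (LinearMap.ker Φ) := by omega
  obtain ⟨w', hw'mem, hw'ne⟩ := Submodule.exists_mem_ne_zero_of_ne_bot (p := LinearMap.ker Φ)
    (by
      intro hbot
      rw [hbot] at hker
      simp at hker)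
  refine ⟨(w' : Fin n → ℝ), w'.2, ?_, ?_⟩
  · simpa using hw'ne
  · intro j hj
    have hj' := Finset.mem_Icc.mp hj
    have hΦ : Φ w' = 0 := hw'mem
    have := congrFun hΦ ⟨j - 1, by omega⟩
    simp only [Φ, LinearMap.pi_apply, LinearMap.comp_apply, Submodule.subtype_apply,
      Pi.zero_apply] at this
    have hj1 : j - 1 + 1 = j := by omega
    rw [hj1] at this
    exact this

set_option maxHeartbeats 1000000 in
/-- with `m ≡ 0 (mod 4)`, `r ≡ 0 (mod 2)`, `s ≤ 2l - 1`, `l > m`,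
and `P = P_1 ⋯ P_m`: `M₊` is non-empty and for every connected component `L` of `M₊`
there exist `x ∈ E₊(P) \ {0}` and `y ∈ E₋(P) \ {0}` with `x + y ∈ L`. -/
theorem component_contains_mixed_point (l s m r : ℕ) (hl : 0 < l) (hs : s ≤ 2 * l - 1)
    (hm : 2 ≤ m) (hm4 : m % 4 = 0) (hr : r ≤ m) (hr2 : r % 2 = 0) (hlm : m < l)
    (P : ℕ → Matrix (Fin (2 * l)) (Fin (2 * l)) ℝ)
    (hP : IsCliffordSystem l s m r P)
    (Pm : Matrix (Fin (2 * l)) (Fin (2 * l)) ℝ)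
    (hPm : Pm = ((List.range m).map fun k => P (1 + k)).prod)
    (Mp : Set (Fin (2 * l) → ℝ))
    (hMp : Mp = {x | psInner (2 * l) s x x = 1 ∧
      ∀ j ∈ Finset.Icc 1 m, psInner (2 * l) s (P j *ᵥ x) x = 0}) :
    Mp.Nonempty ∧
    ∀ x₀ ∈ Mp, ∃ x y : Fin (2 * l) → ℝ,
      Pm *ᵥ x = x ∧ x ≠ 0 ∧ Pm *ᵥ y = -y ∧ y ≠ 0 ∧
      x + y ∈ connectedComponentIn Mp x₀ := by
  obtain ⟨hsym, hrel⟩ := hP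
  have hQ : Pm = Qprod P m := hPm
  -- sign computations
  obtain ⟨t, ht⟩ : 4 ∣ m := Nat.dvd_of_mod_eq_zero hm4
  have htri : m * (m - 1) / 2 = 2 * (t * (m - 1)) := by
    rw [ht, show 4 * t * (4 * t - 1) = (2 * (t * (4 * t - 1))) * 2 by ring,
      Nat.mul_div_cancel _ (by norm_num : 0 < 2)]
  have hsign1 : (-1 : ℝ) ^ (m * (m - 1) / 2) = 1 := by
    rw [htri]; exact Even.neg_one_pow (even_two_mul _)
  have hsignr : (-1 : ℝ) ^ r = 1 := Even.neg_one_pow (Nat.even_iff.mpr hr2)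
  have hsignm : (-1 : ℝ) ^ m = 1 := Even.neg_one_pow (Nat.even_iff.mpr (by omega))
  have hPm2 : Pm * Pm = 1 := by
    rw [hQ, q_self hrel (le_refl m), min_eq_right hr, hsign1, hsignr, one_mul, one_smul]
  have hPmanti : ∀ a ∈ Finset.Icc 1 m, Pm * P a = -(P a * Pm) := by
    intro a ha
    rw [hQ, q_comm hrel ha (le_refl m), if_pos (Finset.mem_Icc.mp ha).2, hsignm]
    rw [mul_one, neg_smul, one_smul]
  have hPmT : Pmᵀ = psJ (2 * l) s * Pm * psJ (2 * l) s := by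
    rw [hQ, q_transpose hrel hsym (le_refl m), hsign1, one_smul]
  have hadjPm : ∀ u v, psInner (2 * l) s (Pm *ᵥ u) v = psInner (2 * l) s u (Pm *ᵥ v) :=
    fun u v => psInner_adj _ _ _ hPmT u v
  have hadjPj : ∀ j ∈ Finset.Icc 1 m, ∀ u v,
      psInner (2 * l) s (P j *ᵥ u) v = psInner (2 * l) s u (P j *ᵥ v) :=
    fun j hj u v => psInner_adj _ _ _ (hsym j hj) u v
  have horth : ∀ u v, Pm *ᵥ u = u → Pm *ᵥ v = -v → psInner (2 * l) s u v = 0 := by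
    intro u v hu hv
    have h := hadjPm u v
    rw [hu, hv, psInner_neg_right] at h
    linarith
  have horth' : ∀ ε : ℝ, ε = 1 ∨ ε = -1 → ∀ u v, Pm *ᵥ u = ε • u → Pm *ᵥ v = (-ε) • v →
      psInner (2 * l) s u v = 0 := by
    intro ε hε u v hu hv
    rcases hε with h | h
    · subst h
      rw [one_smul] at hu
      refine horth u v hu ?_
      rw [hv]; norm_num
    · subst h
      rw [psInner_comm]
      rw [neg_neg, one_smul] at hv
      refine horth v u hv ?_
      rw [hu]; norm_num
  have hPjopp : ∀ (ε : ℝ) (z : Fin (2 * l) → ℝ), Pm *ᵥ z = ε • z → ∀ j ∈ Finset.Icc 1 m,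
      Pm *ᵥ (P j *ᵥ z) = (-ε) • (P j *ᵥ z) := by
    intro ε z hz j hj
    rw [Matrix.mulVec_mulVec, hPmanti j hj, Matrix.neg_mulVec, ← Matrix.mulVec_mulVec, hz,
      Matrix.mulVec_smul, neg_smul]
  have hzorth : ∀ ε : ℝ, ε = 1 ∨ ε = -1 → ∀ z : Fin (2 * l) → ℝ, Pm *ᵥ z = ε • z →
      ∀ j ∈ Finset.Icc 1 m, psInner (2 * l) s (P j *ᵥ z) z = 0 := by
    intro ε hε z hz j hj
    have hne : (-ε) = (1 : ℝ) ∨ (-ε) = -1 := by rcases hε with h | h <;> simp [h]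
    have := horth' (-ε) hne (P j *ᵥ z) z (hPjopp ε z hz j hj) (by rw [neg_neg]; exact hz)
    exact this
  -- eigenvalue ranks
  have h1m : (1 : ℕ) ∈ Finset.Icc 1 m := by rw [Finset.mem_Icc]; omega
  have hP1sq := cliff_sq hrel h1m
  have hη : (if 1 ≤ r then (-1 : ℝ) else 1) = 1 ∨ (if 1 ≤ r then (-1 : ℝ) else 1) = -1 := by
    by_cases h : 1 ≤ r <;> simp [h]
  have her := eigen_rank Pm (P 1) hPm2 _ hη hP1sq (hPmanti 1 h1m)
  have hKp : Module.finrank ℝ (LinearMap.ker (Matrix.mulVecLin (Pm - 1))) = l := by omega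
  have hKm : Module.finrank ℝ (LinearMap.ker (Matrix.mulVecLin (Pm + 1))) = l := by omega
  have hmemp : ∀ w : Fin (2 * l) → ℝ,
      w ∈ LinearMap.ker (Matrix.mulVecLin (Pm - 1)) ↔ Pm *ᵥ w = w := by
    intro w
    rw [LinearMap.mem_ker, Matrix.mulVecLin_apply, Matrix.sub_mulVec, Matrix.one_mulVec,
      sub_eq_zero]
  have hmemm : ∀ w : Fin (2 * l) → ℝ,
      w ∈ LinearMap.ker (Matrix.mulVecLin (Pm + 1)) ↔ Pm *ᵥ w = -w := by
    intro w
    rw [LinearMap.mem_ker, Matrix.mulVecLin_apply, Matrix.add_mulVec, Matrix.one_mulVec,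
      add_eq_zero_iff_eq_neg]
  -- membership maker for eigenvectors of positive norm
  have hmk : ∀ ε : ℝ, ε = 1 ∨ ε = -1 → ∀ z : Fin (2 * l) → ℝ, Pm *ᵥ z = ε • z →
      0 < psInner (2 * l) s z z →
      ((Real.sqrt (psInner (2 * l) s z z))⁻¹ • z) ∈ Mp := by
    intro ε hε z hz hc
    have hsq : Real.sqrt (psInner (2 * l) s z z) * Real.sqrt (psInner (2 * l) s z z)
        = psInner (2 * l) s z z := Real.mul_self_sqrt hc.le
    have hne : Real.sqrt (psInner (2 * l) s z z) ≠ 0 := (Real.sqrt_pos.mpr hc).ne'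
    rw [hMp]
    constructor
    · rw [psInner_smul_left, psInner_smul_right]
      field_simp
      rw [Real.sq_sqrt hc.le]
    · intro j hj
      rw [Matrix.mulVec_smul, psInner_smul_left, psInner_smul_right,
        hzorth ε hε z hz j hj, mul_zero, mul_zero]
  -- Nonemptiness
  have hnonempty : Mp.Nonempty := by
    have hl1 : 1 ≤ 2 * l := by omega
    set i₀ : Fin (2 * l) := ⟨2 * l - 1, by omega⟩ with hi₀
    set eb : Fin (2 * l) → ℝ := Pi.single i₀ 1 with heb
    have hebinner : psInner (2 * l) s eb eb = 1 := by
      rw [psInner, heb, psJ, Matrix.diagonal_mulVec_single, dotProduct_single,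
        Pi.single_apply, if_pos rfl]
      have : ¬ ((i₀ : ℕ) < s) := by
        simp only [hi₀]
        omega
      rw [if_neg this]
      norm_num
    set u := (2 : ℝ)⁻¹ • (eb + Pm *ᵥ eb) with hu_def
    set v := (2 : ℝ)⁻¹ • (eb - Pm *ᵥ eb) with hv_def
    have hu : Pm *ᵥ u = u := by
      rw [hu_def, Matrix.mulVec_smul, Matrix.mulVec_add, Matrix.mulVec_mulVec, hPm2,
        Matrix.one_mulVec, add_comm]
    have hv : Pm *ᵥ v = -v := by
      rw [hv_def, Matrix.mulVec_smul, Matrix.mulVec_sub, Matrix.mulVec_mulVec, hPm2,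
        Matrix.one_mulVec, ← smul_neg, neg_sub]
    have huv : u + v = eb := by
      rw [hu_def, hv_def]
      module
    have h0 : psInner (2 * l) s u v = 0 := horth u v hu hv
    have h0' : psInner (2 * l) s v u = 0 := by rw [psInner_comm]; exact h0
    have hexp : psInner (2 * l) s u u + psInner (2 * l) s v v = 1 := by
      have := hebinner
      rw [← huv, psInner_add_left, psInner_add_right, psInner_add_right, h0, h0'] at this
      linarith
    rcases lt_or_ge 0 (psInner (2 * l) s u u) with hupos | huneg
    · exact ⟨_, hmk 1 (Or.inl rfl) u (by rw [hu, one_smul]) hupos⟩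
    · have hvpos : 0 < psInner (2 * l) s v v := by linarith
      exact ⟨_, hmk (-1) (Or.inr rfl) v (by rw [hv, neg_one_smul]) hvpos⟩
  refine ⟨hnonempty, ?_⟩
  intro x₀ hx₀Mp
  have hx₀ := hx₀Mp
  rw [hMp] at hx₀
  obtain ⟨hnorm, hor⟩ := hx₀
  have hx0ne : x₀ ≠ 0 := by
    intro h
    rw [h] at hnorm
    simp [psInner, Matrix.mulVec_zero] at hnorm
  -- escape construction for pure eigenvectors
  have escape : ∀ ε : ℝ, ε = 1 ∨ ε = -1 → Pm *ᵥ x₀ = ε • x₀ →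
      ∃ x y : Fin (2 * l) → ℝ,
        Pm *ᵥ x = x ∧ x ≠ 0 ∧ Pm *ᵥ y = -y ∧ y ≠ 0 ∧
        x + y ∈ connectedComponentIn Mp x₀ := by
    intro ε hε heig
    obtain ⟨K, hKrank, hKmem⟩ : ∃ K : Submodule ℝ (Fin (2 * l) → ℝ),
        m < Module.finrank ℝ K ∧ ∀ w ∈ K, Pm *ᵥ w = (-ε) • w := by
      rcases hε with h | h
      · subst h
        refine ⟨LinearMap.ker (Matrix.mulVecLin (Pm + 1)), by omega, ?_⟩
        intro w hw
        rw [(hmemm w).mp hw]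
        norm_num
      · subst h
        refine ⟨LinearMap.ker (Matrix.mulVecLin (Pm - 1)), by omega, ?_⟩
        intro w hw
        rw [(hmemp w).mp hw]
        norm_num
    obtain ⟨w, hwK, hwne, hworth⟩ := exists_good_w K s hKrank (fun j => P j *ᵥ x₀)
    have hweig : Pm *ᵥ w = (-ε) • w := hKmem w hwK
    have hnegε : (-ε) = (1 : ℝ) ∨ (-ε) = -1 := by rcases hε with h | h <;> simp [h]
    have hxw : psInner (2 * l) s x₀ w = 0 := horth' ε hε x₀ w heig hweig
    have hwx : psInner (2 * l) s w x₀ = 0 := by rw [psInner_comm]; exact hxw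
    have hPjw_w : ∀ j ∈ Finset.Icc 1 m, psInner (2 * l) s (P j *ᵥ w) w = 0 :=
      fun j hj => hzorth (-ε) hnegε w hweig j hj
    have hPjx_w : ∀ j ∈ Finset.Icc 1 m, psInner (2 * l) s (P j *ᵥ x₀) w = 0 := hworth
    have hPjw_x : ∀ j ∈ Finset.Icc 1 m, psInner (2 * l) s (P j *ᵥ w) x₀ = 0 := by
      intro j hj
      rw [hadjPj j hj, psInner_comm]
      exact hworth j hj
    set c := psInner (2 * l) s w w with hc
    set δ := (1 + |c|)⁻¹ with hδ
    have hd : (0 : ℝ) < 1 + |c| := by positivity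
    have hδpos : 0 < δ := by rw [hδ]; positivity
    have hquad : ∀ t ∈ Set.Icc (0 : ℝ) δ, 0 < 1 - c * t ^ 2 := by
      intro t ht
      have h0t : 0 ≤ t := ht.1
      have htd : t * (1 + |c|) ≤ 1 := by
        calc t * (1 + |c|) ≤ (1 + |c|)⁻¹ * (1 + |c|) :=
              mul_le_mul_of_nonneg_right ht.2 hd.le
          _ = 1 := inv_mul_cancel₀ hd.ne'
      nlinarith [le_abs_self c, abs_nonneg c, sq_nonneg t, mul_nonneg h0t (abs_nonneg c),
        sq_nonneg (t - 1)]
    set γ : ℝ → (Fin (2 * l) → ℝ) :=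
      fun t => Real.sqrt (1 - c * t ^ 2) • x₀ + t • w with hγ
    have hγ0 : γ 0 = x₀ := by
      rw [hγ]
      simp [Real.sqrt_one]
    have hγMp : ∀ t ∈ Set.Icc (0 : ℝ) δ, γ t ∈ Mp := by
      intro t ht
      have hpos := hquad t ht
      have hf : Real.sqrt (1 - c * t ^ 2) * Real.sqrt (1 - c * t ^ 2) = 1 - c * t ^ 2 :=
        Real.mul_self_sqrt hpos.le
      rw [hMp]
      constructor
      · show psInner (2 * l) s (γ t) (γ t) = 1
        simp only [hγ]
        simp only [psInner_add_left, psInner_add_right, psInner_smul_left, psInner_smul_right]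
        rw [hnorm, hxw, hwx, ← hc]
        linear_combination hf
      · intro j hj
        show psInner (2 * l) s (P j *ᵥ γ t) (γ t) = 0
        simp only [hγ]
        rw [Matrix.mulVec_add, Matrix.mulVec_smul, Matrix.mulVec_smul]
        simp only [psInner_add_left, psInner_add_right, psInner_smul_left, psInner_smul_right]
        rw [hor j hj, hPjx_w j hj, hPjw_x j hj, hPjw_w j hj]
        ring
    have hcont : Continuous γ := by
      rw [hγ]
      apply Continuous.add
      · exact (Real.continuous_sqrt.comp
          (continuous_const.sub (continuous_const.mul (continuous_pow 2)))).smul continuous_const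
      · exact continuous_id.smul continuous_const
    have hpre : IsPreconnected (γ '' Set.Icc 0 δ) :=
      isPreconnected_Icc.image γ hcont.continuousOn
    have hsubMp : γ '' Set.Icc 0 δ ⊆ Mp := by
      rintro _ ⟨t, ht, rfl⟩
      exact hγMp t ht
    have hx0in : x₀ ∈ γ '' Set.Icc 0 δ := ⟨0, ⟨le_refl 0, hδpos.le⟩, hγ0⟩
    have hcc := hpre.subset_connectedComponentIn hx0in hsubMp
    have hend : γ δ ∈ connectedComponentIn Mp x₀ := hcc ⟨δ, ⟨hδpos.le, le_refl δ⟩, rfl⟩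
    have hfδpos : 0 < Real.sqrt (1 - c * δ ^ 2) :=
      Real.sqrt_pos.mpr (hquad δ ⟨hδpos.le, le_refl δ⟩)
    rcases hε with h1 | h1
    · subst h1
      refine ⟨Real.sqrt (1 - c * δ ^ 2) • x₀, δ • w, ?_, ?_, ?_, ?_, ?_⟩
      · rw [Matrix.mulVec_smul, heig, one_smul]
      · exact smul_ne_zero hfδpos.ne' hx0ne
      · rw [Matrix.mulVec_smul, hweig, smul_smul, mul_neg, mul_one, neg_smul]
      · exact smul_ne_zero hδpos.ne' hwne
      · exact hend
    · subst h1
      refine ⟨δ • w, Real.sqrt (1 - c * δ ^ 2) • x₀, ?_, ?_, ?_, ?_, ?_⟩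
      · rw [Matrix.mulVec_smul, hweig, smul_smul, neg_neg, mul_one]
      · exact smul_ne_zero hδpos.ne' hwne
      · rw [Matrix.mulVec_smul, heig, smul_smul, mul_neg, mul_one, neg_smul]
      · exact smul_ne_zero hfδpos.ne' hx0ne
      · rw [add_comm]
        exact hend
  -- split x₀ into eigencomponents
  set u := (2 : ℝ)⁻¹ • (x₀ + Pm *ᵥ x₀) with hu_def
  set v := (2 : ℝ)⁻¹ • (x₀ - Pm *ᵥ x₀) with hv_def
  have hu : Pm *ᵥ u = u := by
    rw [hu_def, Matrix.mulVec_smul, Matrix.mulVec_add, Matrix.mulVec_mulVec, hPm2,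
      Matrix.one_mulVec, add_comm]
  have hv : Pm *ᵥ v = -v := by
    rw [hv_def, Matrix.mulVec_smul, Matrix.mulVec_sub, Matrix.mulVec_mulVec, hPm2,
      Matrix.one_mulVec, ← smul_neg, neg_sub]
  have huv : u + v = x₀ := by
    rw [hu_def, hv_def]
    module
  by_cases hu0 : u = 0
  · have hsum0 : x₀ + Pm *ᵥ x₀ = 0 := by
      have := hu0
      rw [hu_def, smul_eq_zero] at this
      rcases this with h | h
      · norm_num at h
      · exact h
    have heig : Pm *ᵥ x₀ = (-1 : ℝ) • x₀ := by
      rw [neg_one_smul]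
      exact eq_neg_of_add_eq_zero_right hsum0
    exact escape (-1) (Or.inr rfl) heig
  · by_cases hv0 : v = 0
    · have hsum0 : x₀ - Pm *ᵥ x₀ = 0 := by
        have := hv0
        rw [hv_def, smul_eq_zero] at this
        rcases this with h | h
        · norm_num at h
        · exact h
      have heig : Pm *ᵥ x₀ = (1 : ℝ) • x₀ := by
        rw [one_smul]
        exact (sub_eq_zero.mp hsum0).symm
      exact escape 1 (Or.inl rfl) heig
    · exact ⟨u, v, hu, hu0, hv, hv0, by rw [huv]; exact mem_connectedComponentIn hx₀Mp⟩
end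
end
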